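/- arXiv:1105.5180 — 5 statements merged into one kernel-verified Lean document; each statement's English description precedes it below -/
import Mathlib

section
/- Let n > 2 be an integer and let A ∈ ℂ[z] have degree at most n−1. Then max_{|z|=1} |A(z)| ≤ (2 log n) · max_{0≤k<n} |A(ζ_n^k)|. -/
noncomputable section

open Polynomial Filter

/-- The primitive `n`-th root of unity `e^{2πi/n}` in `ℂ`. -/
def zetaC (n : ℕ) : ℂ := Complex.exp (2 * Real.pi * Complex.I / n)

/-- The `L_α` norm of a polynomial on the unit circle. -/
def lnorm (α : ℝ) (A : Polynomial ℂ) : ℝ :=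
  ((2 * Real.pi)⁻¹ * ∫ θ in (0:ℝ)..(2 * Real.pi),
      ‖A.eval (Complex.exp (Complex.I * θ))‖ ^ α) ^ α⁻¹

/-- The merit factor `F(A) = ‖A‖₂⁴ / (‖A‖₄⁴ - ‖A‖₂⁴)`. -/
def meritF (A : Polynomial ℂ) : ℝ :=
  (lnorm 2 A) ^ 4 / ((lnorm 4 A) ^ 4 - (lnorm 2 A) ^ 4)

/-- The reciprocal merit factor `1/F(A) = (‖A‖₄⁴ - ‖A‖₂⁴) / ‖A‖₂⁴`. -/
def invMF (A : Polynomial ℂ) : ℝ :=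
  ((lnorm 4 A) ^ 4 - (lnorm 2 A) ^ 4) / (lnorm 2 A) ^ 4

/-- The rotation `A_r(z) = z^{-⌊nr⌋} A(z) mod (z^n - 1)`. -/
def rot (n : ℕ) (r : ℝ) (A : Polynomial ℂ) : Polynomial ℂ :=
  (Polynomial.X ^ (((-⌊(n : ℝ) * r⌋) % (n : ℤ)).toNat) * A) % (Polynomial.X ^ n - 1)

/-- The character polynomial `J(z) = ∑_{j=1}^{n-1} (j|n) z^j`. -/
def charPoly (n : ℕ) : Polynomial ℂ :=
  ∑ j ∈ Finset.range n, Polynomial.C ((jacobiSym j n : ℤ) : ℂ) * Polynomial.X ^ j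

/-- `f(r) = 1/(1/6 + 8(|r|-1/4)²)` for `-1/2 < r ≤ 1/2`, extended with period 1. -/
def fLit (r : ℝ) : ℝ :=
  1 / (1/6 + 8 * (|(if Int.fract r ≤ 1/2 then Int.fract r else Int.fract r - 1)| - 1/4) ^ 2)

/-- `𝒱_n`: polynomials `∑_{j=0}^{n-1} v_j z^j` with `v_j ∈ {0,1,-1}` and
`v_j = 0 ↔ gcd(j,n) = 1`. -/
def VSet (n : ℕ) : Set (Polynomial ℂ) :=
  {V | (∀ j, n ≤ j → V.coeff j = 0) ∧
       ∀ j < n, (V.coeff j = 0 ∨ V.coeff j = 1 ∨ V.coeff j = -1) ∧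
         (V.coeff j = 0 ↔ Nat.gcd j n = 1)}

/-- The Littlewood-completion polynomial `V(z) = ∑_{0≤j<n, gcd(j,n)>1} z^j`. -/
def Vall (n : ℕ) : Polynomial ℂ :=
  ∑ j ∈ Finset.range n, if Nat.gcd j n = 1 then 0 else Polynomial.X ^ j

/-- `V(z) = ∑_{0≤j<n, gcd(j,n)>1} (j | n/gcd(j,n)) z^j`. -/
def Vjac (n : ℕ) : Polynomial ℂ :=
  ∑ j ∈ Finset.range n, if Nat.gcd j n = 1 then 0
    else Polynomial.C ((jacobiSym j (n / Nat.gcd j n) : ℤ) : ℂ) * Polynomial.X ^ j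


set_option maxHeartbeats 1000000
section S9sec
namespace S9
open Finset


lemma sin_chord {x A : ℝ} (hA0 : 0 < A) (hAπ : A ≤ Real.pi) (hx0 : 0 ≤ x) (hxA : x ≤ A) :
    Real.sin A / A * x ≤ Real.sin x := by
  have hcc := strictConcaveOn_sin_Icc.concaveOn
  have h0 : (0:ℝ) ∈ Set.Icc 0 Real.pi := by constructor <;> [rfl; exact Real.pi_pos.le]
  have hA : A ∈ Set.Icc 0 Real.pi := ⟨hA0.le, hAπ⟩
  have hxa : 0 ≤ 1 - x / A := by
    have : x / A ≤ 1 := by rw [div_le_one hA0]; exact hxA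
    linarith
  have hxb : 0 ≤ x / A := div_nonneg hx0 hA0.le
  have hs : (1 - x/A) + x/A = 1 := by ring
  have := hcc.2 h0 hA hxa hxb hs
  simp only [smul_eq_mul, mul_zero, Real.sin_zero, zero_add] at this
  have hxx : (x / A) * A = x := div_mul_cancel₀ x hA0.ne'
  rw [hxx] at this
  calc Real.sin A / A * x = x / A * Real.sin A := by ring
  _ ≤ Real.sin x := this

lemma abs_exp_I_sub_one (x : ℝ) :
    ‖Complex.exp ((x:ℂ) * Complex.I) - 1‖ = 2 * |Real.sin (x/2)| := by
  have h : Complex.exp ((x:ℂ) * Complex.I) - 1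
      = Complex.ofReal (Real.cos x - 1) + Complex.ofReal (Real.sin x) * Complex.I := by
    rw [Complex.exp_mul_I, ← Complex.ofReal_cos, ← Complex.ofReal_sin]
    push_cast
    ring
  rw [h, Complex.norm_add_mul_I, Real.abs_sin_half]
  have hsc : Real.sin x ^ 2 + Real.cos x ^ 2 = 1 := Real.sin_sq_add_cos_sq x
  have h1 : (Real.cos x - 1)^2 + Real.sin x ^ 2 = 2 - 2 * Real.cos x := by nlinarith
  rw [h1]
  rw [show (2:ℝ) - 2*Real.cos x = 4 * ((1 - Real.cos x)/2) by ring, Real.sqrt_mul (by norm_num)]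
  rw [show (4:ℝ) = 2^2 by norm_num, Real.sqrt_sq (by norm_num)]

def F (n : ℕ) (φ : ℝ) : ℝ :=
  ‖∑ j ∈ Finset.range n, (Complex.exp ((φ:ℂ) * Complex.I)) ^ j‖

def S (n : ℕ) (θ : ℝ) : ℝ := ∑ k ∈ Finset.range n, F n (θ - 2*Real.pi*k/n)

lemma F_nonneg (n : ℕ) (φ : ℝ) : 0 ≤ F n φ := norm_nonneg _

lemma F_le (n : ℕ) (φ : ℝ) : F n φ ≤ n := by
  unfold F
  calc ‖∑ j ∈ Finset.range n, (Complex.exp ((φ:ℂ) * Complex.I)) ^ j‖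
      ≤ ∑ j ∈ Finset.range n, ‖(Complex.exp ((φ:ℂ) * Complex.I)) ^ j‖ :=
        norm_sum_le _ _
  _ = ∑ _j ∈ Finset.range n, (1:ℝ) := by
        apply Finset.sum_congr rfl; intro j _
        rw [norm_pow, Complex.norm_exp_ofReal_mul_I, one_pow]
  _ = n := by simp

lemma F_per (n : ℕ) : Function.Periodic (F n) (2*Real.pi) := by
  intro φ
  unfold F
  congr 2
  rw [Complex.ofReal_add, add_mul, Complex.exp_add]
  norm_num [Complex.exp_two_pi_mul_I]

lemma F_even (n : ℕ) (φ : ℝ) : F n (-φ) = F n φ := by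
  unfold F
  have h : Complex.exp ((-φ:ℝ) * Complex.I) = (starRingEnd ℂ) (Complex.exp ((φ:ℝ) * Complex.I)) := by
    rw [← Complex.exp_conj]
    congr 1
    simp [Complex.conj_I]
  rw [h]
  rw [show ∑ j ∈ Finset.range n, ((starRingEnd ℂ) (Complex.exp ((φ:ℝ) * Complex.I))) ^ j
      = (starRingEnd ℂ) (∑ j ∈ Finset.range n, (Complex.exp ((φ:ℝ) * Complex.I)) ^ j) by
    rw [map_sum]; apply Finset.sum_congr rfl; intros; rw [map_pow]]
  exact Complex.norm_conj _

lemma F_ratio (n : ℕ) (x : ℝ) (hs : Real.sin x ≠ 0) : F n (2*x) ≤ 1 / |Real.sin x| := by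
  have habs : ‖Complex.exp ((2*x:ℝ) * Complex.I) - 1‖ = 2*|Real.sin x| := by
    rw [abs_exp_I_sub_one]
    norm_num
  have hne : Complex.exp ((2*x:ℝ) * Complex.I) ≠ 1 := by
    intro h
    rw [h] at habs
    simp only [sub_self, norm_zero] at habs
    have : |Real.sin x| = 0 := by linarith [abs_nonneg (Real.sin x)]
    exact hs (abs_eq_zero.mp this)
  unfold F
  rw [geom_sum_eq hne, norm_div, habs]
  have hnum : ‖Complex.exp ((2*x:ℝ) * Complex.I) ^ n - 1‖ ≤ 2 := by
    calc ‖Complex.exp ((2*x:ℝ) * Complex.I) ^ n - 1‖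
        ≤ ‖Complex.exp ((2*x:ℝ) * Complex.I) ^ n‖ + ‖(1:ℂ)‖ :=
          norm_sub_le _ _
    _ = 2 := by rw [norm_pow, Complex.norm_exp_ofReal_mul_I, one_pow, norm_one]; norm_num
  have hpos : 0 < |Real.sin x| := abs_pos.mpr hs
  rw [div_le_div_iff₀ (by linarith) (by linarith), one_mul]
  calc ‖Complex.exp ((2*x:ℝ) * Complex.I) ^ n - 1‖ * |Real.sin x| ≤ 2 * |Real.sin x| := by
        apply mul_le_mul_of_nonneg_right hnum (abs_nonneg _)
  _ = 2 * |Real.sin x| := rfl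

-- sharper: F n (2x) ≤ |sin (n x)| / |sin x| (not needed if 1/|sin| suffices)

lemma S_per (n : ℕ) (hn : 0 < n) : Function.Periodic (S n) (2*Real.pi/n) := by
  intro θ
  obtain ⟨m, rfl⟩ : ∃ m, n = m + 1 := ⟨n - 1, by omega⟩
  unfold S
  rw [Finset.sum_range_succ', Finset.sum_range_succ]
  congr 1
  · apply Finset.sum_congr rfl; intro k _
    congr 1
    push_cast
    ring
  · have h2 : θ + 2*Real.pi/((m:ℝ)+1) - 2*Real.pi*(0:ℕ)/((m:ℝ)+1)
        = (θ - 2*Real.pi*(m:ℝ)/((m:ℝ)+1)) + 2*Real.pi := by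
      have hm : ((m:ℝ)+1) ≠ 0 := by positivity
      field_simp
      ring
    push_cast
    push_cast at h2
    rw [h2]
    exact F_per (m+1) _

lemma S_neg (n : ℕ) (hn : 0 < n) (θ : ℝ) : S n (-θ) = S n θ := by
  obtain ⟨m, rfl⟩ : ∃ m, n = m + 1 := ⟨n - 1, by omega⟩
  unfold S
  have step1 : ∀ k : ℕ, F (m+1) (-θ - 2*Real.pi*(k:ℝ)/((m:ℕ)+1:ℝ))
      = F (m+1) (θ + 2*Real.pi*(k:ℝ)/((m:ℕ)+1:ℝ)) := by
    intro k
    rw [show -θ - 2*Real.pi*(k:ℝ)/((m:ℕ)+1:ℝ) = -(θ + 2*Real.pi*(k:ℝ)/((m:ℕ)+1:ℝ)) by ring]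
    exact F_even _ _
  calc ∑ k ∈ Finset.range (m+1), F (m+1) (-θ - 2*Real.pi*(k:ℕ)/((m:ℕ)+1:ℕ))
      = ∑ k ∈ Finset.range (m+1), F (m+1) (θ + 2*Real.pi*(k:ℝ)/((m:ℝ)+1)) := by
        apply Finset.sum_congr rfl; intro k _
        push_cast
        push_cast at step1
        exact step1 k
  _ = ∑ k ∈ Finset.range (m+1), F (m+1) (θ + 2*Real.pi*(((m+1-1-k:ℕ)):ℝ)/((m:ℝ)+1)) := by
        rw [← Finset.sum_range_reflect]
  _ = ∑ k ∈ Finset.range (m+1), F (m+1) (θ - 2*Real.pi*((k:ℝ)+1)/((m:ℝ)+1)) := by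
        apply Finset.sum_congr rfl; intro k hk
        have hk' : k < m + 1 := Finset.mem_range.mp hk
        have hc : (((m+1-1-k:ℕ)):ℝ) = (m:ℝ) - k := by
          have : m + 1 - 1 - k = m - k := by omega
          rw [this]
          push_cast [Nat.cast_sub (by omega : k ≤ m)]
          ring
        rw [hc]
        have harg : θ + 2*Real.pi*((m:ℝ) - k)/((m:ℝ)+1)
            = (θ - 2*Real.pi*((k:ℝ)+1)/((m:ℝ)+1)) + 2*Real.pi := by
          have hm : ((m:ℝ)+1) ≠ 0 := by positivity
          field_simp
          ring
        rw [harg, F_per (m+1) _]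
  _ = ∑ k ∈ Finset.range (m+1), F (m+1) (θ - 2*Real.pi*(k:ℝ)/((m:ℝ)+1)) := by
        rw [Finset.sum_range_succ, Finset.sum_range_succ']
        congr 1
        · apply Finset.sum_congr rfl; intro k _; push_cast; ring_nf
        · have h1 : θ - 2*Real.pi*((m:ℝ)+1)/((m:ℝ)+1) = θ - 2*Real.pi := by
            have hm : ((m:ℝ)+1) ≠ 0 := by positivity
            field_simp
          have h2 : θ - 2*Real.pi*((0:ℕ):ℝ)/((m:ℝ)+1) = θ := by push_cast; ring
          rw [h1, h2, Function.Periodic.sub_eq (F_per (m+1))]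
  _ = ∑ k ∈ Finset.range (m+1), F (m+1) (θ - 2*Real.pi*(k:ℕ)/((m:ℕ)+1:ℕ)) := by
        apply Finset.sum_congr rfl; intro k _; push_cast; ring_nf

lemma S_reduce (n : ℕ) (hn : 0 < n) (θ : ℝ) :
    ∃ β, 0 ≤ β ∧ β ≤ Real.pi/(2*n) ∧ S n θ = S n (2*β) := by
  set p := 2*Real.pi/n with hp
  have hnp : (0:ℝ) < n := by exact_mod_cast hn
  have hppos : 0 < p := by rw [hp]; positivity
  have hper : Function.Periodic (S n) p := S_per n hn
  set γ := p * Int.fract (θ/p) with hγdef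
  have hγ0 : 0 ≤ γ := mul_nonneg hppos.le (Int.fract_nonneg _)
  have hγlt : γ < p := by
    have h1 := Int.fract_lt_one (θ/p)
    calc γ = p * Int.fract (θ/p) := rfl
    _ < p * 1 := by apply mul_lt_mul_of_pos_left h1 hppos
    _ = p := mul_one p
  have hSγ : S n θ = S n γ := by
    have h1 : γ = θ - (⌊θ/p⌋ : ℤ) * p := by
      rw [hγdef, Int.fract]
      field_simp
    rw [h1, Function.Periodic.sub_int_mul_eq hper]
  have hp4 : p/4 = Real.pi/(2*n) := by rw [hp]; field_simp; ring
  rcases le_or_gt γ (p/2) with hc | hc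
  · refine ⟨γ/2, by linarith, by linarith [hp4], ?_⟩
    rw [hSγ]; congr 1; ring
  · refine ⟨(p-γ)/2, by linarith, by linarith [hp4], ?_⟩
    have h2 : S n (p - γ) = S n γ := by
      have h3 : S n (-γ + p) = S n (-γ) := hper (-γ)
      have h4 : p - γ = -γ + p := by ring
      rw [h4, h3, S_neg n hn]
    rw [hSγ, ← h2]; congr 1; ring



def q (n j : ℕ) : ℝ := 1 / (min (2*(j:ℝ)-1) (2*((n:ℝ)-(j:ℝ))))
def Q (n : ℕ) : ℝ := ∑ j ∈ Finset.Ico 2 (n-1), q n j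

lemma log_ratio {a b : ℝ} (h0 : 0 < a) (hab : a < b) : (b - a)/b ≤ Real.log b - Real.log a := by
  have hb : 0 < b := h0.trans hab
  have h1 : Real.log (a/b) ≤ a/b - 1 := Real.log_le_sub_one_of_pos (by positivity)
  rw [Real.log_div h0.ne' hb.ne'] at h1
  have : a/b - 1 = -((b-a)/b) := by field_simp; ring
  linarith [h1.trans_eq this]

lemma T1_bound : ∀ n : ℕ, 3 ≤ n →
    ∑ j ∈ Finset.Ico 2 (n-1), 1/(2*(j:ℝ)-1) ≤ (1/2)*Real.log (2*(n:ℝ)-5) := by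
  intro n hn
  induction n, hn using Nat.le_induction with
  | base => norm_num
  | succ n hn ih =>
    have h1 : (n+1) - 1 = (n-1) + 1 := by omega
    rw [h1, Finset.sum_Ico_succ_top (by omega : 2 ≤ n-1)]
    have hc : ((n-1:ℕ):ℝ) = (n:ℝ) - 1 := by
      push_cast [Nat.cast_sub (by omega : 1 ≤ n)]; ring
    rw [hc]
    have hn3 : (3:ℝ) ≤ (n:ℝ) := by exact_mod_cast hn
    have hlr := log_ratio (a := 2*(n:ℝ)-5) (b := 2*(n:ℝ)-3) (by linarith) (by linarith)
    have hsimp : (2*(n:ℝ)-3 - (2*(n:ℝ)-5))/(2*(n:ℝ)-3) = 2/(2*(n:ℝ)-3) := by ring_nf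
    rw [hsimp] at hlr
    have hgoal : 2*(((n:ℕ)+1:ℕ):ℝ)-5 = 2*(n:ℝ)-3 := by push_cast; ring
    rw [hgoal]
    have heq : 1/(2*((n:ℝ)-1)-1) = (1/2) * (2/(2*(n:ℝ)-3)) := by
      rw [show 2*((n:ℝ)-1)-1 = 2*(n:ℝ)-3 by ring]; ring
    rw [heq]
    linarith

lemma T2_bound : ∀ n : ℕ, 3 ≤ n →
    ∑ j ∈ Finset.Ico 2 (n-1), 1/(2*(j:ℝ)) ≤ (1/2)*Real.log ((n:ℝ)-2) := by
  intro n hn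
  induction n, hn using Nat.le_induction with
  | base => norm_num
  | succ n hn ih =>
    have h1 : (n+1) - 1 = (n-1) + 1 := by omega
    rw [h1, Finset.sum_Ico_succ_top (by omega : 2 ≤ n-1)]
    have hc : ((n-1:ℕ):ℝ) = (n:ℝ) - 1 := by
      push_cast [Nat.cast_sub (by omega : 1 ≤ n)]; ring
    rw [hc]
    have hn3 : (3:ℝ) ≤ (n:ℝ) := by exact_mod_cast hn
    have hlr := log_ratio (a := (n:ℝ)-2) (b := (n:ℝ)-1) (by linarith) (by linarith)
    have hsimp : ((n:ℝ)-1 - ((n:ℝ)-2))/((n:ℝ)-1) = 1/((n:ℝ)-1) := by ring_nf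
    rw [hsimp] at hlr
    have hgoal : (((n:ℕ)+1:ℕ):ℝ)-2 = (n:ℝ)-1 := by push_cast; ring
    rw [hgoal]
    have h2 : 1/(2*((n:ℝ)-1)) = (1/2) * (1/((n:ℝ)-1)) := by
      field_simp
    linarith

lemma Q_le (n : ℕ) (hn : 3 ≤ n) :
    Q n ≤ (1/2)*Real.log (2*(n:ℝ)-5) + (1/2)*Real.log ((n:ℝ)-2) := by
  have h1 : Q n ≤ ∑ j ∈ Finset.Ico 2 (n-1), (1/(2*(j:ℝ)-1) + 1/(2*((n:ℝ)-(j:ℝ)))) := by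
    apply Finset.sum_le_sum
    intro j hj
    obtain ⟨hj2, hj3⟩ := Finset.mem_Ico.mp hj
    have hj2' : (2:ℝ) ≤ (j:ℝ) := by exact_mod_cast hj2
    have hj3' : (j:ℝ) ≤ (n:ℝ) - 2 := by
      have : j ≤ n - 2 := by omega
      have := (Nat.cast_le (α := ℝ)).mpr this
      push_cast [Nat.cast_sub (by omega : 2 ≤ n)] at this
      linarith
    have ha : (0:ℝ) < 2*(j:ℝ)-1 := by linarith
    have hb : (0:ℝ) < 2*((n:ℝ)-(j:ℝ)) := by linarith
    unfold q
    rcases min_cases (2*(j:ℝ)-1) (2*((n:ℝ)-(j:ℝ))) with ⟨hmin, _⟩ | ⟨hmin, _⟩ <;> rw [hmin]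
    · have : 0 < 1/(2*((n:ℝ)-(j:ℝ))) := by positivity
      linarith
    · have : 0 < 1/(2*(j:ℝ)-1) := by positivity
      linarith
  have h2 : ∑ j ∈ Finset.Ico 2 (n-1), (1/(2*(j:ℝ)-1) + 1/(2*((n:ℝ)-(j:ℝ))))
      = (∑ j ∈ Finset.Ico 2 (n-1), 1/(2*(j:ℝ)-1)) + ∑ j ∈ Finset.Ico 2 (n-1), 1/(2*((n:ℝ)-(j:ℝ))) :=
    Finset.sum_add_distrib
  have h3 : ∑ j ∈ Finset.Ico 2 (n-1), 1/(2*((n:ℝ)-(j:ℝ)))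
      = ∑ j ∈ Finset.Ico 2 (n-1), 1/(2*(j:ℝ)) := by
    apply Finset.sum_nbij' (i := fun j => n - j) (j := fun j => n - j)
    · intro a ha
      obtain ⟨h2a, h3a⟩ := Finset.mem_Ico.mp ha
      exact Finset.mem_Ico.mpr ⟨by omega, by omega⟩
    · intro a ha
      obtain ⟨h2a, h3a⟩ := Finset.mem_Ico.mp ha
      exact Finset.mem_Ico.mpr ⟨by omega, by omega⟩
    · intro a ha
      obtain ⟨h2a, h3a⟩ := Finset.mem_Ico.mp ha
      omega
    · intro a ha
      obtain ⟨h2a, h3a⟩ := Finset.mem_Ico.mp ha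
      omega
    · intro a ha
      obtain ⟨h2a, h3a⟩ := Finset.mem_Ico.mp ha
      have hc : ((n-a:ℕ):ℝ) = (n:ℝ) - a := by
        push_cast [Nat.cast_sub (by omega : a ≤ n)]; ring
      rw [hc]
  calc Q n ≤ _ := h1
  _ = _ := h2
  _ ≤ (1/2)*Real.log (2*(n:ℝ)-5) + (1/2)*Real.log ((n:ℝ)-2) := by
      rw [h3]
      exact add_le_add (T1_bound n hn) (T2_bound n hn)




lemma exp_recip_bound {c : ℝ} (h1 : c < 1) : Real.exp c * (1 - c) ≤ 1 := by
  have h3 := Real.add_one_le_exp (-c)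
  have h5 : 0 < Real.exp c := Real.exp_pos c
  have h6 : Real.exp c * (1 - c) ≤ Real.exp c * Real.exp (-c) :=
    mul_le_mul_of_nonneg_left (by linarith) h5.le
  rw [← Real.exp_add] at h6
  simpa using h6

lemma log_lb (x c : ℝ) (m : ℕ) (h0 : 0 ≤ c) (h1 : c < 1) (hx : 0 < x)
    (h : (2.7182818286:ℝ)^m ≤ x*(1-c)) : (m:ℝ) + c ≤ Real.log x := by
  rw [Real.le_log_iff_exp_le hx, Real.exp_add]
  have he1 : Real.exp (m:ℝ) ≤ (2.7182818286:ℝ)^m := by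
    rw [← Real.exp_one_pow]
    exact pow_le_pow_left₀ (Real.exp_pos 1).le Real.exp_one_lt_d9.le m
  have he2 : Real.exp c * (1-c) ≤ 1 := exp_recip_bound h1
  nlinarith [Real.exp_pos (m:ℝ), Real.exp_pos c, pow_pos (show (0:ℝ) < 2.7182818286 by norm_num) m]

lemma sqrt3_le : Real.sqrt 3 ≤ 1.7320509 := by
  nlinarith [Real.sq_sqrt (show (0:ℝ) ≤ 3 by norm_num), Real.sqrt_nonneg 3]

lemma AL (n : ℕ) (hn : 3 ≤ n) : 1 + 2/3 + 2*Real.sqrt 3/9 + Q n ≤ 2 * Real.log n := by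
  have hs3 := sqrt3_le
  rcases lt_or_ge n 9 with h9 | h9
  · interval_cases n
    · have hQ : Q 3 = 0 := by simp [Q]
      have hlog : ((1:ℕ):ℝ) + 0.0258 ≤ Real.log 3 := log_lb 3 0.0258 1 (by norm_num) (by norm_num) (by norm_num) (by norm_num)
      rw [hQ]
      push_cast at hlog
      nlinarith
    · have hQ : Q 4 = 1/3 := by
        simp [Q, q, Finset.sum_Ico_eq_sum_range]
        norm_num [min_def]
      have hlog : (0.6931471803:ℝ) ≤ Real.log 2 := Real.log_two_gt_d9.le
      have h4 : Real.log 4 = 2 * Real.log 2 := by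
        rw [show (4:ℝ) = 2^2 by norm_num, Real.log_pow]; push_cast; ring
      rw [hQ, show ((4:ℕ):ℝ) = 4 by norm_num, h4]
      nlinarith
    · have hQ : Q 5 = 1/3 + 1/4 := by
        simp [Q, q, Finset.sum_Ico_eq_sum_range, Finset.sum_range_succ]
        norm_num [min_def]
      have hlog : ((1:ℕ):ℝ) + 0.3176 ≤ Real.log 5 := log_lb 5 0.3176 1 (by norm_num) (by norm_num) (by norm_num) (by norm_num)
      rw [hQ]
      push_cast at hlog
      nlinarith
    · have hQ : Q 6 = 1/3 + 1/5 + 1/4 := by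
        simp [Q, q, Finset.sum_Ico_eq_sum_range, Finset.sum_range_succ]
        norm_num [min_def]
      have hlog2 : (0.6931471803:ℝ) ≤ Real.log 2 := Real.log_two_gt_d9.le
      have hlog3 : ((1:ℕ):ℝ) + 0.0258 ≤ Real.log 3 := log_lb 3 0.0258 1 (by norm_num) (by norm_num) (by norm_num) (by norm_num)
      have h6 : Real.log 6 = Real.log 2 + Real.log 3 := by
        rw [show (6:ℝ) = 2*3 by norm_num, Real.log_mul (by norm_num) (by norm_num)]
      rw [hQ, show ((6:ℕ):ℝ) = 6 by norm_num, h6]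
      push_cast at hlog3
      nlinarith
    · have hQ : Q 7 = 1/3 + 1/5 + 1/6 + 1/4 := by
        simp [Q, q, Finset.sum_Ico_eq_sum_range, Finset.sum_range_succ]
        norm_num [min_def]
      have hlog : ((1:ℕ):ℝ) + 0.5009 ≤ Real.log 7 := log_lb 7 0.5009 1 (by norm_num) (by norm_num) (by norm_num) (by norm_num)
      rw [hQ]
      push_cast at hlog
      nlinarith
    · have hQ : Q 8 = 1/3 + 1/5 + 1/7 + 1/6 + 1/4 := by
        simp [Q, q, Finset.sum_Ico_eq_sum_range, Finset.sum_range_succ]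
        norm_num [min_def]
      have hlog : (0.6931471803:ℝ) ≤ Real.log 2 := Real.log_two_gt_d9.le
      have h8 : Real.log 8 = 3 * Real.log 2 := by
        rw [show (8:ℝ) = 2^3 by norm_num, Real.log_pow]; push_cast; ring
      rw [hQ, show ((8:ℕ):ℝ) = 8 by norm_num, h8]
      nlinarith
  · -- general case n ≥ 9
    have hn9 : (9:ℝ) ≤ (n:ℝ) := by exact_mod_cast h9
    have hp1 : (0:ℝ) < 2*(n:ℝ)-5 := by linarith
    have hp2 : (0:ℝ) < (n:ℝ)-2 := by linarith
    have hQb := Q_le n hn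
    have hprod : (1/2)*Real.log (2*(n:ℝ)-5) + (1/2)*Real.log ((n:ℝ)-2)
        = (1/2)*Real.log ((2*(n:ℝ)-5)*((n:ℝ)-2)) := by
      rw [Real.log_mul hp1.ne' hp2.ne']; ring
    have hle : (2*(n:ℝ)-5)*((n:ℝ)-2) ≤ (n:ℝ)^4/61 := by
      nlinarith [sq_nonneg ((n:ℝ)^2-61), sq_nonneg ((n:ℝ))]
    have hlog2 : Real.log ((2*(n:ℝ)-5)*((n:ℝ)-2)) ≤ Real.log ((n:ℝ)^4/61) :=
      Real.log_le_log (by positivity) hle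
    have hlog3 : Real.log ((n:ℝ)^4/61) = 4*Real.log (n:ℝ) - Real.log 61 := by
      rw [Real.log_div (by positivity) (by norm_num), Real.log_pow]; push_cast; ring
    have hlog61 : ((4:ℕ):ℝ) + 0.1032 ≤ Real.log 61 := log_lb 61 0.1032 4 (by norm_num) (by norm_num) (by norm_num) (by norm_num)
    push_cast at hlog61
    nlinarith

lemma sin_mono {u v : ℝ} (h0 : 0 ≤ u) (huv : u ≤ v) (hv : v ≤ Real.pi/2) :
    Real.sin u ≤ Real.sin v := by
  have hπ := Real.pi_pos
  exact Real.strictMonoOn_sin.monotoneOn ⟨by linarith, by linarith⟩ ⟨by linarith, hv⟩ huv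

lemma sin_ge_L {a L : ℝ} (hL0 : 0 ≤ L) (hL1 : L ≤ a) (hL2 : L ≤ Real.pi - a)
    (hL3 : L ≤ Real.pi/2) : Real.sin L ≤ Real.sin a := by
  rcases le_or_gt a (Real.pi/2) with h | h
  · exact sin_mono hL0 hL1 h
  · rw [← Real.sin_pi_sub a]
    exact sin_mono hL0 hL2 (by linarith)

lemma term_le (n : ℕ) (j : ℕ) (β τ : ℝ) (hτ : 0 < τ)
    (hτs : τ ≤ Real.sin (Real.pi*(j:ℝ)/(n:ℝ) - β)) :
    F n (2*β - 2*Real.pi*(j:ℝ)/(n:ℝ)) ≤ 1/τ := by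
  set a := Real.pi*(j:ℝ)/(n:ℝ) - β with ha
  have hapos : 0 < Real.sin a := lt_of_lt_of_le hτ hτs
  have harg : 2*β - 2*Real.pi*(j:ℝ)/(n:ℝ) = 2*(-a) := by rw [ha]; ring
  have hsx : Real.sin (-a) = -Real.sin a := Real.sin_neg a
  have hne : Real.sin (-a) ≠ 0 := by rw [hsx]; exact neg_ne_zero.mpr hapos.ne'
  have habs : |Real.sin (-a)| = Real.sin a := by rw [hsx, abs_neg, abs_of_pos hapos]
  calc F n (2*β - 2*Real.pi*(j:ℝ)/(n:ℝ)) = F n (2*(-a)) := by rw [harg]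
  _ ≤ 1/|Real.sin (-a)| := F_ratio n (-a) hne
  _ = 1/Real.sin a := by rw [habs]
  _ ≤ 1/τ := one_div_le_one_div_of_le hτ hτs

lemma term_bound_j (n j : ℕ) (hn : 3 ≤ n) (hj1 : 1 ≤ j) (hj2 : j ≤ n-1) (β : ℝ)
    (hβ0 : 0 ≤ β) (hβ : β ≤ Real.pi/(2*(n:ℝ))) :
    F n (2*β - 2*Real.pi*(j:ℝ)/(n:ℝ)) ≤
      if j = 1 then 2*(n:ℝ)/3 else if j = n-1 then 2*Real.sqrt 3*(n:ℝ)/9 else (n:ℝ) * q n j := by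
  have hπ := Real.pi_pos
  have hn3 : (3:ℝ) ≤ (n:ℝ) := by exact_mod_cast hn
  have hn0 : (0:ℝ) < (n:ℝ) := by linarith
  have hj1' : (1:ℝ) ≤ (j:ℝ) := by exact_mod_cast hj1
  have hj2' : (j:ℝ) ≤ (n:ℝ) - 1 := by
    have h' : j + 1 ≤ n := by omega
    have h'' := (Nat.cast_le (α := ℝ)).mpr h'
    push_cast at h''; linarith
  set c := Real.pi/(2*(n:ℝ)) with hc
  have hc0 : 0 < c := by rw [hc]; positivity
  have hπeq : Real.pi = 2*(n:ℝ)*c := by rw [hc]; field_simp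
  have hangle : Real.pi*(j:ℝ)/(n:ℝ) - β = 2*(j:ℝ)*c - β := by
    rw [hπeq]; field_simp
  have hβc : β ≤ c := hβ
  by_cases hc1 : j = 1
  · subst hc1
    rw [if_pos rfl]
    have hτs : 3/(2*(n:ℝ)) ≤ Real.sin (Real.pi*((1:ℕ):ℝ)/(n:ℝ) - β) := by
      have hchord := sin_chord (A := Real.pi/6) (x := c) (by positivity) (by linarith)
        hc0.le (by rw [hπeq]; nlinarith)
      have hval : Real.sin (Real.pi/6) / (Real.pi/6) * c = 3/(2*(n:ℝ)) := by
        rw [Real.sin_pi_div_six, hπeq]; field_simp; ring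
      have hLa : Real.sin c ≤ Real.sin (Real.pi*((1:ℕ):ℝ)/(n:ℝ) - β) := by
        rw [hangle]
        apply sin_ge_L hc0.le (by push_cast; nlinarith) (by rw [hπeq]; push_cast; nlinarith)
          (by rw [hπeq]; nlinarith)
      calc (3:ℝ)/(2*(n:ℝ)) = Real.sin (Real.pi/6) / (Real.pi/6) * c := hval.symm
      _ ≤ Real.sin c := hchord
      _ ≤ _ := hLa
    have := term_le n 1 β (3/(2*(n:ℝ))) (by positivity) hτs
    calc F n (2*β - 2*Real.pi*((1:ℕ):ℝ)/(n:ℝ)) ≤ 1/(3/(2*(n:ℝ))) := this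
    _ = 2*(n:ℝ)/3 := by field_simp
  by_cases hc2 : j = n-1
  · rw [if_neg hc1, if_pos hc2]
    have hjcast : (j:ℝ) = (n:ℝ) - 1 := by
      subst hc2; push_cast [Nat.cast_sub (by omega : 1 ≤ n)]; ring
    have hs3 : (0:ℝ) < Real.sqrt 3 := Real.sqrt_pos.mpr (by norm_num)
    have h33 : Real.sqrt 3 * Real.sqrt 3 = 3 := Real.mul_self_sqrt (by norm_num)
    have hτpos : (0:ℝ) < 3*Real.sqrt 3/(2*(n:ℝ)) := by positivity
    have hτs : 3*Real.sqrt 3/(2*(n:ℝ)) ≤ Real.sin (Real.pi*(j:ℝ)/(n:ℝ) - β) := by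
      have hchord := sin_chord (A := Real.pi/3) (x := 2*c) (by positivity) (by linarith)
        (by positivity) (by rw [hπeq]; nlinarith)
      have hval : Real.sin (Real.pi/3) / (Real.pi/3) * (2*c) = 3*Real.sqrt 3/(2*(n:ℝ)) := by
        rw [Real.sin_pi_div_three, hπeq]; field_simp
      have hLa : Real.sin (2*c) ≤ Real.sin (Real.pi*(j:ℝ)/(n:ℝ) - β) := by
        rw [hangle, hjcast]
        apply sin_ge_L (by positivity) (by nlinarith) (by rw [hπeq]; nlinarith)
          (by rw [hπeq]; nlinarith)
      calc 3*Real.sqrt 3/(2*(n:ℝ)) = Real.sin (Real.pi/3) / (Real.pi/3) * (2*c) := hval.symm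
      _ ≤ Real.sin (2*c) := hchord
      _ ≤ _ := hLa
    have := term_le n j β (3*Real.sqrt 3/(2*(n:ℝ))) hτpos hτs
    calc F n (2*β - 2*Real.pi*(j:ℝ)/(n:ℝ)) ≤ 1/(3*Real.sqrt 3/(2*(n:ℝ))) := this
    _ = 2*Real.sqrt 3*(n:ℝ)/9 := by
        rw [one_div_div]
        rw [div_eq_div_iff (by positivity) (by norm_num)]
        have hsq : Real.sqrt 3 ^ 2 = 3 := Real.sq_sqrt (by norm_num)
        linear_combination (-6*(n:ℝ)) * hsq
  · rw [if_neg hc1, if_neg hc2]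
    have hj2n : 2 ≤ j := by omega
    have hjn2 : j ≤ n - 2 := by omega
    have hj2r : (2:ℝ) ≤ (j:ℝ) := by exact_mod_cast hj2n
    have hjn2r : (j:ℝ) ≤ (n:ℝ) - 2 := by
      have h' : j + 2 ≤ n := by omega
      have h'' := (Nat.cast_le (α := ℝ)).mpr h'
      push_cast at h''; linarith
    set d := min (2*(j:ℝ)-1) (2*((n:ℝ)-(j:ℝ))) with hd
    have hd3 : (3:ℝ) ≤ d := le_min (by linarith) (by linarith)
    have hd0 : (0:ℝ) < d := by linarith
    have hdj : d ≤ 2*(j:ℝ)-1 := min_le_left _ _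
    have hdn : d ≤ 2*((n:ℝ)-(j:ℝ)) := min_le_right _ _
    have hdltn : d ≤ (n:ℝ) := by
      rcases le_total (2*(j:ℝ)-1) (2*((n:ℝ)-(j:ℝ))) with h | h
      · rw [hd, min_eq_left h]; linarith
      · rw [hd, min_eq_right h]; linarith
    have hτpos : (0:ℝ) < d/(n:ℝ) := by positivity
    have hτs : d/(n:ℝ) ≤ Real.sin (Real.pi*(j:ℝ)/(n:ℝ) - β) := by
      have hjordan := Real.mul_le_sin (x := d*c) (by positivity) (by rw [hπeq]; nlinarith)
      have hval : 2/Real.pi*(d*c) = d/(n:ℝ) := by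
        rw [hπeq]; field_simp
      have hLa : Real.sin (d*c) ≤ Real.sin (Real.pi*(j:ℝ)/(n:ℝ) - β) := by
        rw [hangle]
        apply sin_ge_L (by positivity) (by nlinarith) (by rw [hπeq]; nlinarith)
          (by rw [hπeq]; nlinarith)
      calc d/(n:ℝ) = 2/Real.pi*(d*c) := hval.symm
      _ ≤ Real.sin (d*c) := hjordan
      _ ≤ _ := hLa
    have := term_le n j β (d/(n:ℝ)) hτpos hτs
    calc F n (2*β - 2*Real.pi*(j:ℝ)/(n:ℝ)) ≤ 1/(d/(n:ℝ)) := this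
    _ = (n:ℝ) * q n j := by
        rw [one_div_div]
        unfold q
        rw [← hd]
        field_simp



lemma core (n : ℕ) (hn : 3 ≤ n) (β : ℝ) (hβ0 : 0 ≤ β) (hβ : β ≤ Real.pi/(2*(n:ℝ))) :
    S n (2*β) ≤ 2*(n:ℝ)*Real.log n := by
  obtain ⟨m, hm⟩ : ∃ m, n = m + 1 := ⟨n-1, by omega⟩
  have hm2 : 2 ≤ m := by omega
  have hn0 : (0:ℝ) < (n:ℝ) := by positivity
  unfold S
  have hsplit : ∑ k ∈ Finset.range n, F n (2*β - 2*Real.pi*(k:ℝ)/(n:ℝ))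
      = (∑ k ∈ Finset.range m, F n (2*β - 2*Real.pi*(((k+1:ℕ)):ℝ)/(n:ℝ)))
        + F n (2*β - 2*Real.pi*(((0:ℕ)):ℝ)/(n:ℝ)) := by
    rw [hm]
    exact Finset.sum_range_succ' _ m
  rw [hsplit]
  set B : ℕ → ℝ := fun j => if j = 1 then 2*(n:ℝ)/3 else if j = n-1 then 2*Real.sqrt 3*(n:ℝ)/9
    else (n:ℝ) * q n j with hB
  have hsum1 : ∑ k ∈ Finset.range m, F n (2*β - 2*Real.pi*(((k+1:ℕ)):ℝ)/(n:ℝ))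
      ≤ ∑ k ∈ Finset.range m, B (k+1) := by
    apply Finset.sum_le_sum
    intro k hk
    have hk' := Finset.mem_range.mp hk
    exact term_bound_j n (k+1) hn (by omega) (by omega) β hβ0 hβ
  have hIco : ∑ k ∈ Finset.range m, B (k+1) = ∑ j ∈ Finset.Ico 1 (m+1), B j := by
    rw [Finset.sum_Ico_eq_sum_range]
    simp [Nat.add_comm]
  have hsplit2 : ∑ j ∈ Finset.Ico 1 (m+1), B j
      = B 1 + (∑ j ∈ Finset.Ico 2 m, B j) + B m := by
    rw [← Finset.sum_Ico_consecutive _ (by omega : 1 ≤ 2) (by omega : 2 ≤ m+1)]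
    rw [← Finset.sum_Ico_consecutive _ (by omega : 2 ≤ m) (by omega : m ≤ m+1)]
    rw [show Finset.Ico 1 2 = {1} by rfl, Finset.sum_singleton]
    rw [Finset.sum_Ico_succ_top (le_refl m), Finset.Ico_self, Finset.sum_empty, zero_add]
    ring
  have hB1 : B 1 = 2*(n:ℝ)/3 := by rw [hB]; simp
  have hBm : B m = 2*Real.sqrt 3*(n:ℝ)/9 := by
    rw [hB]
    simp only []
    rw [if_neg (by omega), if_pos (by omega)]
  have hBmid : ∑ j ∈ Finset.Ico 2 m, B j = (n:ℝ) * Q n := by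
    have h1 : ∀ j ∈ Finset.Ico 2 m, B j = (n:ℝ) * q n j := by
      intro j hj
      obtain ⟨h2j, h3j⟩ := Finset.mem_Ico.mp hj
      rw [hB]
      simp only []
      rw [if_neg (by omega), if_neg (by omega)]
    rw [Finset.sum_congr rfl h1, ← Finset.mul_sum]
    unfold Q
    rw [show n - 1 = m by omega]
  have hF0 : F n (2*β - 2*Real.pi*(((0:ℕ)):ℝ)/(n:ℝ)) ≤ (n:ℝ) := F_le n _
  have hAL := AL n hn
  have hALn := mul_le_mul_of_nonneg_left hAL hn0.le
  calc (∑ k ∈ Finset.range m, F n (2*β - 2*Real.pi*(((k+1:ℕ)):ℝ)/(n:ℝ)))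
        + F n (2*β - 2*Real.pi*(((0:ℕ)):ℝ)/(n:ℝ))
      ≤ (∑ k ∈ Finset.range m, B (k+1)) + (n:ℝ) := add_le_add hsum1 hF0
  _ = 2*(n:ℝ)/3 + (n:ℝ) * Q n + 2*Real.sqrt 3*(n:ℝ)/9 + (n:ℝ) := by
      rw [hIco, hsplit2, hB1, hBm, hBmid]
  _ ≤ 2*(n:ℝ)*Real.log n := by nlinarith

lemma key (n : ℕ) (hn : 0 < n) (θ : ℝ) (k : ℕ) :
    Complex.exp ((θ:ℂ) * Complex.I) * (zetaC n ^ k)⁻¹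
      = Complex.exp (((θ - 2*Real.pi*k/n : ℝ):ℂ) * Complex.I) := by
  have hn' : ((n:ℕ):ℂ) ≠ 0 := Nat.cast_ne_zero.mpr hn.ne'
  rw [zetaC, ← Complex.exp_nat_mul, ← Complex.exp_neg, ← Complex.exp_add]
  congr 1
  push_cast
  field_simp
  ring

lemma orth (n : ℕ) (hn : 0 < n) (m j : ℕ) (hm : m < n) (hj : j < n) :
    ∑ k ∈ Finset.range n, (zetaC n ^ m * (zetaC n ^ j)⁻¹) ^ k
      = if m = j then (n:ℂ) else 0 := by
  have hζ : IsPrimitiveRoot (zetaC n) n := Complex.isPrimitiveRoot_exp n hn.ne'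
  have hζ0 : zetaC n ≠ 0 := Complex.exp_ne_zero _
  have hζn : zetaC n ^ n = 1 := hζ.pow_eq_one
  by_cases h : m = j
  · subst h
    rw [mul_inv_cancel₀ (pow_ne_zero _ hζ0)]
    simp
  · rw [if_neg h]
    have hr1 : zetaC n ^ m * (zetaC n ^ j)⁻¹ ≠ 1 := by
      intro hr
      apply h
      apply hζ.pow_inj hm hj
      field_simp at hr
      exact hr
    have hrn : (zetaC n ^ m * (zetaC n ^ j)⁻¹) ^ n = 1 := by
      rw [mul_pow, inv_pow, ← pow_mul, ← pow_mul, mul_comm m n, mul_comm j n,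
        pow_mul, pow_mul, hζn, one_pow, one_pow, inv_one, mul_one]
    rw [geom_sum_eq hr1, hrn, sub_self, zero_div]

lemma interp (n : ℕ) (hn : 0 < n) (A : Polynomial ℂ) (hdeg : A.natDegree < n) (z : ℂ) :
    (n : ℂ) * A.eval z
      = ∑ k ∈ Finset.range n, A.eval (zetaC n ^ k)
          * ∑ j ∈ Finset.range n, (z * (zetaC n ^ k)⁻¹) ^ j := by
  have expand : ∀ k, A.eval (zetaC n ^ k) * ∑ j ∈ Finset.range n, (z * (zetaC n ^ k)⁻¹) ^ j
      = ∑ m ∈ Finset.range n, ∑ j ∈ Finset.range n,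
          (A.coeff m * z ^ j) * (zetaC n ^ m * (zetaC n ^ j)⁻¹) ^ k := by
    intro k
    rw [Polynomial.eval_eq_sum_range' hdeg, Finset.sum_mul_sum]
    apply Finset.sum_congr rfl; intro m _
    apply Finset.sum_congr rfl; intro j _
    ring
  symm
  calc ∑ k ∈ Finset.range n, A.eval (zetaC n ^ k) * ∑ j ∈ Finset.range n, (z * (zetaC n ^ k)⁻¹) ^ j
      = ∑ k ∈ Finset.range n, ∑ m ∈ Finset.range n, ∑ j ∈ Finset.range n,
          (A.coeff m * z ^ j) * (zetaC n ^ m * (zetaC n ^ j)⁻¹) ^ k := by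
        exact Finset.sum_congr rfl fun k _ => expand k
  _ = ∑ m ∈ Finset.range n, ∑ j ∈ Finset.range n,
        (A.coeff m * z ^ j) * ∑ k ∈ Finset.range n, (zetaC n ^ m * (zetaC n ^ j)⁻¹) ^ k := by
        rw [Finset.sum_comm]
        apply Finset.sum_congr rfl; intro m _
        rw [Finset.sum_comm]
        apply Finset.sum_congr rfl; intro j _
        rw [Finset.mul_sum]
  _ = ∑ m ∈ Finset.range n, ∑ j ∈ Finset.range n,
        (if m = j then (A.coeff m * z ^ j) * (n:ℂ) else 0) := by
        apply Finset.sum_congr rfl; intro m hm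
        apply Finset.sum_congr rfl; intro j hj
        rw [orth n hn m j (Finset.mem_range.mp hm) (Finset.mem_range.mp hj)]
        split_ifs <;> simp
  _ = ∑ m ∈ Finset.range n, (A.coeff m * z ^ m) * (n:ℂ) := by
        apply Finset.sum_congr rfl; intro m hm
        rw [Finset.sum_ite_eq (Finset.range n) m (fun j => (A.coeff m * z ^ j) * (n:ℂ))]
        rw [if_pos hm]
  _ = (n:ℂ) * A.eval z := by
        rw [Polynomial.eval_eq_sum_range' hdeg, Finset.mul_sum]
        apply Finset.sum_congr rfl; intro m _
        ring


lemma S_bound (n : ℕ) (hn : 3 ≤ n) (θ : ℝ) : S n θ ≤ 2*(n:ℝ)*Real.log n := by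
  obtain ⟨β, h0, h1, heq⟩ := S_reduce n (by omega) θ
  rw [heq]
  exact core n hn β h0 h1

end S9
end S9sec

/-- For `n > 2` and `A ∈ ℂ[z]` of degree at most `n-1`,
`max_{|z|=1} |A(z)| ≤ (2 log n) max_{0≤k<n} |A(ζ_n^k)|`. -/
theorem stmt_9 (n : ℕ) (hn : 2 < n) (A : Polynomial ℂ) (hdeg : A.natDegree ≤ n - 1) :
    ∀ z : ℂ, ‖z‖ = 1 →
      ‖A.eval z‖ ≤
        (2 * Real.log n) *
          (Finset.range n).sup' (Finset.nonempty_range_iff.mpr (by omega))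
            (fun k => ‖A.eval (zetaC n ^ k)‖) := by

  intro z hz
  have hn0 : 0 < n := by omega
  have hn3 : 3 ≤ n := by omega
  have hnr : (0:ℝ) < (n:ℝ) := by positivity
  set M := (Finset.range n).sup' (Finset.nonempty_range_iff.mpr (by omega))
      (fun k => ‖A.eval (zetaC n ^ k)‖) with hMdef
  have hM : ∀ k ∈ Finset.range n, ‖A.eval (zetaC n ^ k)‖ ≤ M := by
    intro k hk
    rw [hMdef]
    exact Finset.le_sup' (fun k => ‖A.eval (zetaC n ^ k)‖) hk
  have hM0 : 0 ≤ M :=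
    le_trans (norm_nonneg _) (hM 0 (Finset.mem_range.mpr hn0))
  set θ := Complex.arg z with hθ
  have hzexp : z = Complex.exp ((θ:ℂ) * Complex.I) := by
    have h := Complex.norm_mul_exp_arg_mul_I z
    rw [hz] at h
    simpa using h.symm
  have hinterp := S9.interp n hn0 A (by omega) z
  have hchain : (n:ℝ) * ‖A.eval z‖ ≤ M * (2*(n:ℝ)*Real.log n) := by
    have h1 : (n:ℝ) * ‖A.eval z‖ = ‖(n:ℂ) * A.eval z‖ := by
      rw [norm_mul, Complex.norm_natCast]
    rw [h1, hinterp]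
    calc ‖∑ k ∈ Finset.range n, A.eval (zetaC n ^ k)
            * ∑ j ∈ Finset.range n, (z * (zetaC n ^ k)⁻¹) ^ j‖
        ≤ ∑ k ∈ Finset.range n, ‖A.eval (zetaC n ^ k)
            * ∑ j ∈ Finset.range n, (z * (zetaC n ^ k)⁻¹) ^ j‖ := norm_sum_le _ _
    _ = ∑ k ∈ Finset.range n, ‖A.eval (zetaC n ^ k)‖
            * ‖∑ j ∈ Finset.range n, (z * (zetaC n ^ k)⁻¹) ^ j‖ := by
          apply Finset.sum_congr rfl; intros; rw [norm_mul]
    _ ≤ ∑ k ∈ Finset.range n, M * ‖∑ j ∈ Finset.range n, (z * (zetaC n ^ k)⁻¹) ^ j‖ := by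
          apply Finset.sum_le_sum
          intro k hk
          exact mul_le_mul_of_nonneg_right (hM k hk) (norm_nonneg _)
    _ = M * S9.S n θ := by
          rw [← Finset.mul_sum]
          congr 1
          unfold S9.S S9.F
          apply Finset.sum_congr rfl; intro k _
          congr 1
          apply Finset.sum_congr rfl; intro j _
          congr 1
          rw [hzexp]
          exact S9.key n hn0 θ k
    _ ≤ M * (2*(n:ℝ)*Real.log n) :=
          mul_le_mul_of_nonneg_left (S9.S_bound n hn3 θ) hM0
  have hfinal : (n:ℝ) * ‖A.eval z‖ ≤ (n:ℝ) * ((2 * Real.log n) * M) := by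
    calc (n:ℝ) * ‖A.eval z‖ ≤ M * (2*(n:ℝ)*Real.log n) := hchain
    _ = (n:ℝ) * ((2 * Real.log n) * M) := by ring
  exact le_of_mul_le_mul_left hfinal hnr
end
end

section
/- Let n be a positive odd square-free integer. Then for every integer u, ∑_{j=0}^{n−1} (j|n)((j+u)|n) = μ(n/gcd(u,n)) · φ(gcd(u,n)), where (·|n) is the Jacobi symbol, μ is the Möbius function, and φ is Euler's totient function. -/
noncomputable section

open Polynomial Filter

section AuxStmt11
open Finset

private lemma char_shift_sum {p : ℕ} [Fact p.Prime] (hp : p ≠ 2) (a : ZMod p) (ha : a ≠ 0) :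
    ∑ x : ZMod p, quadraticChar (ZMod p) x * quadraticChar (ZMod p) (x + a) = -1 := by
  set χ := quadraticChar (ZMod p)
  have hchar : ringChar (ZMod p) ≠ 2 := by
    rw [ZMod.ringChar_zmod_n]; exact hp
  have h0 : ∑ x : ZMod p, χ x * χ (x + a)
      = ∑ x ∈ univ.erase (0 : ZMod p), χ x * χ (x + a) := by
    rw [Finset.sum_erase]
    simp [χ]
  have h1 : ∀ x ∈ univ.erase (0 : ZMod p), χ x * χ (x + a) = χ (1 + a * x⁻¹) := by
    intro x hx
    have hx0 : x ≠ 0 := Finset.ne_of_mem_erase hx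
    have : x + a = x * (1 + a * x⁻¹) := by field_simp
    rw [this, map_mul, ← mul_assoc, ← sq, quadraticChar_sq_one hx0, one_mul]
  rw [h0, Finset.sum_congr rfl h1]
  have h2 : ∑ x ∈ univ.erase (0 : ZMod p), χ (1 + a * x⁻¹)
      = ∑ t ∈ univ.erase (1 : ZMod p), χ t := by
    apply Finset.sum_nbij' (fun x => 1 + a * x⁻¹) (fun t => a * (t - 1)⁻¹)
    · intro x hx
      have hx0 : x ≠ 0 := Finset.ne_of_mem_erase hx
      simp only [Finset.mem_erase, Finset.mem_univ, and_true]
      intro h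
      have : a * x⁻¹ = 0 := by linear_combination h
      rcases mul_eq_zero.mp this with h' | h'
      · exact ha h'
      · exact hx0 (inv_eq_zero.mp h')
    · intro t ht
      have ht1 : t ≠ 1 := Finset.ne_of_mem_erase ht
      simp only [Finset.mem_erase, Finset.mem_univ, and_true]
      intro h
      rcases mul_eq_zero.mp h with h' | h'
      · exact ha h'
      · exact ht1 (by have := inv_eq_zero.mp h'; linear_combination this)
    · intro x hx
      have hx0 : x ≠ 0 := Finset.ne_of_mem_erase hx
      field_simp
      simp [ha]
    · intro t ht
      have ht1 : t ≠ 1 := Finset.ne_of_mem_erase ht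
      have : t - 1 ≠ 0 := sub_ne_zero.mpr ht1
      field_simp
      ring
    · intro x hx; rfl
  rw [h2, Finset.sum_erase_eq_sub (Finset.mem_univ _), quadraticChar_sum_zero hchar]
  simp [χ]

private def Jterm (n : ℕ) (u : ℤ) (j : ℤ) : ℤ := jacobiSym j n * jacobiSym (j + u) n

private lemma sum_range_eq_zmod (n : ℕ) [NeZero n] (f : ℤ → ℤ)
    (hf : ∀ a b : ℤ, a % n = b % n → f a = f b) :
    ∑ j ∈ Finset.range n, f j = ∑ x : ZMod n, f (x.val : ℤ) := by
  refine Finset.sum_nbij' (fun j => ((j : ZMod n))) (fun x => x.val) ?_ ?_ ?_ ?_ ?_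
  · intro j _; exact Finset.mem_univ _
  · intro x _; exact Finset.mem_range.mpr (ZMod.val_lt x)
  · intro j hj
    rw [ZMod.val_natCast, Nat.mod_eq_of_lt (Finset.mem_range.mp hj)]
  · intro x _; exact ZMod.natCast_zmod_val x
  · intro j hj
    apply hf
    rw [ZMod.val_natCast]
    push_cast
    simp [Int.emod_emod_of_dvd]

private lemma Jsum_prime (p : ℕ) (hp : p.Prime) (hp2 : p ≠ 2) (u : ℤ) :
    ∑ j ∈ Finset.range p, jacobiSym j p * jacobiSym ((j : ℤ) + u) p
      = if (p : ℤ) ∣ u then (p : ℤ) - 1 else -1 := by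
  haveI : Fact p.Prime := ⟨hp⟩
  by_cases hdvd : (p : ℤ) ∣ u
  · rw [if_pos hdvd]
    obtain ⟨t, rfl⟩ := hdvd
    have hterm : ∀ j ∈ Finset.range p, jacobiSym j p * jacobiSym ((j : ℤ) + (p : ℤ) * t) p
        = if j = 0 then 0 else 1 := by
      intro j hj
      have : jacobiSym ((j : ℤ) + (p : ℤ) * t) p = jacobiSym j p :=
        jacobiSym.mod_left' (Int.add_mul_emod_self_left _ _ _)
      rw [this, ← sq]
      by_cases h0 : j = 0
      · simp [h0, jacobiSym.zero_left hp.one_lt]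
      · rw [if_neg h0, jacobiSym.sq_one]
        rw [Int.gcd_natCast_natCast]
        exact (hp.coprime_iff_not_dvd.mpr
          (Nat.not_dvd_of_pos_of_lt (Nat.pos_of_ne_zero h0) (Finset.mem_range.mp hj))).symm
    rw [Finset.sum_congr rfl hterm,
      show Finset.range p = insert 0 ((Finset.range p).erase 0) from
        (Finset.insert_erase (Finset.mem_range.mpr hp.pos)).symm,
      Finset.sum_insert (Finset.notMem_erase _ _), if_pos rfl, zero_add]
    rw [Finset.sum_congr rfl (fun j hj => if_neg (Finset.ne_of_mem_erase hj)),
      Finset.sum_const, Finset.card_erase_of_mem (Finset.mem_range.mpr hp.pos),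
      Finset.card_range]
    have := hp.one_le
    rw [nsmul_eq_mul, mul_one]
    omega
  · rw [if_neg hdvd]
    haveI : NeZero p := ⟨hp.ne_zero⟩
    rw [sum_range_eq_zmod p (fun a => jacobiSym a p * jacobiSym (a + u) p)
      (fun a b h => by rw [jacobiSym.mod_left' h, jacobiSym.mod_left' (Int.ModEq.add_right u h)])]
    have hx : ∀ x : ZMod p, jacobiSym ((x.val : ℤ)) p * jacobiSym ((x.val : ℤ) + u) p
        = quadraticChar (ZMod p) x * quadraticChar (ZMod p) (x + (u : ZMod p)) := by
      intro x
      rw [← jacobiSym.legendreSym.to_jacobiSym, ← jacobiSym.legendreSym.to_jacobiSym]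
      unfold legendreSym
      push_cast [ZMod.natCast_zmod_val]
      rfl
    rw [Finset.sum_congr rfl (fun x _ => hx x)]
    exact char_shift_sum hp2 (u : ZMod p)
      (fun h => hdvd ((ZMod.intCast_zmod_eq_zero_iff_dvd u p).mp h))

private lemma nat_gcd_mul {v m k : ℕ} (h : Nat.Coprime m k) :
    Nat.gcd v (m * k) = Nat.gcd v m * Nat.gcd v k := by
  apply Nat.dvd_antisymm
  · set d := Nat.gcd v (m * k) with hd
    have h1 : d ∣ Nat.gcd d m * Nat.gcd d k :=
      Nat.dvd_gcd_mul_gcd_iff_dvd_mul.mpr (Nat.gcd_dvd_right v (m * k))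
    refine h1.trans (mul_dvd_mul ?_ ?_)
    · exact Nat.dvd_gcd ((Nat.gcd_dvd_left d m).trans (Nat.gcd_dvd_left v (m * k)))
        (Nat.gcd_dvd_right d m)
    · exact Nat.dvd_gcd ((Nat.gcd_dvd_left d k).trans (Nat.gcd_dvd_left v (m * k)))
        (Nat.gcd_dvd_right d k)
  · apply Nat.dvd_gcd
    · exact Nat.Coprime.mul_dvd_of_dvd_of_dvd
        (Nat.Coprime.coprime_dvd_left (Nat.gcd_dvd_right v m)
          (Nat.Coprime.coprime_dvd_right (Nat.gcd_dvd_right v k) h))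
        (Nat.gcd_dvd_left v m) (Nat.gcd_dvd_left v k)
    · exact mul_dvd_mul (Nat.gcd_dvd_right v m) (Nat.gcd_dvd_right v k)

private lemma int_gcd_mul (u : ℤ) {m k : ℕ} (h : Nat.Coprime m k) :
    Int.gcd u ((m * k : ℕ) : ℤ) = Int.gcd u (m : ℤ) * Int.gcd u (k : ℤ) := by
  simp only [Int.gcd, Int.natAbs_natCast]
  exact nat_gcd_mul h

private lemma Jterm_congr (n : ℕ) (u : ℤ) {a b : ℤ} (h : a % (n : ℤ) = b % (n : ℤ)) :
    jacobiSym a n * jacobiSym (a + u) n = jacobiSym b n * jacobiSym (b + u) n := by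
  rw [jacobiSym.mod_left' h, jacobiSym.mod_left' (Int.ModEq.add_right u h)]

private lemma zmod_crt_sum (m k : ℕ) [NeZero m] [NeZero k] (h : Nat.Coprime m k)
    (G : ZMod m → ℤ) (H : ZMod k → ℤ) :
    haveI : NeZero (m * k) := ⟨mul_ne_zero (NeZero.ne m) (NeZero.ne k)⟩
    ∑ x : ZMod (m * k), G ((x.val : ZMod m)) * H ((x.val : ZMod k))
      = (∑ y : ZMod m, G y) * (∑ z : ZMod k, H z) := by
  haveI : NeZero (m * k) := ⟨mul_ne_zero (NeZero.ne m) (NeZero.ne k)⟩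
  have hbij : Function.Bijective
      (fun x : ZMod (m * k) => (((x.val : ZMod m), (x.val : ZMod k)) : ZMod m × ZMod k)) := by
    rw [Fintype.bijective_iff_injective_and_card]
    constructor
    · intro x y hxy
      simp only [Prod.mk.injEq, ZMod.natCast_eq_natCast_iff] at hxy
      have : x.val ≡ y.val [MOD m * k] :=
        (Nat.modEq_and_modEq_iff_modEq_mul h).mp ⟨hxy.1, hxy.2⟩
      have hv : x.val = y.val := by
        have : x.val % (m * k) = y.val % (m * k) := this
        rwa [Nat.mod_eq_of_lt (ZMod.val_lt x), Nat.mod_eq_of_lt (ZMod.val_lt y)] at this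
      calc x = ((x.val : ℕ) : ZMod (m * k)) := (ZMod.natCast_zmod_val x).symm
        _ = ((y.val : ℕ) : ZMod (m * k)) := by rw [hv]
        _ = y := ZMod.natCast_zmod_val y
    · simp [ZMod.card]
  rw [Fintype.sum_bijective _ hbij _
    (fun p : ZMod m × ZMod k => G p.1 * H p.2) (fun x => rfl),
    Fintype.sum_prod_type, ← Finset.sum_mul_sum]

private lemma Jsum_mul (m k : ℕ) [NeZero m] [NeZero k] (hco : Nat.Coprime m k) (u : ℤ) :
    (∑ j ∈ Finset.range (m * k), jacobiSym j (m * k) * jacobiSym ((j : ℤ) + u) (m * k))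
    = (∑ j ∈ Finset.range m, jacobiSym j m * jacobiSym ((j : ℤ) + u) m) *
      (∑ j ∈ Finset.range k, jacobiSym j k * jacobiSym ((j : ℤ) + u) k) := by
  haveI : NeZero (m * k) := ⟨mul_ne_zero (NeZero.ne m) (NeZero.ne k)⟩
  rw [sum_range_eq_zmod (m * k) _ (fun a b h => Jterm_congr (m * k) u h),
      sum_range_eq_zmod m _ (fun a b h => Jterm_congr m u h),
      sum_range_eq_zmod k _ (fun a b h => Jterm_congr k u h),
      ← zmod_crt_sum m k hco
        (fun y => jacobiSym (y.val : ℤ) m * jacobiSym ((y.val : ℤ) + u) m)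
        (fun z => jacobiSym (z.val : ℤ) k * jacobiSym ((z.val : ℤ) + u) k)]
  apply Finset.sum_congr rfl
  intro x _
  have hm : ((((x.val : ZMod m)).val : ℤ)) % (m : ℤ) = ((x.val : ℤ)) % (m : ℤ) := by
    rw [ZMod.val_natCast]; push_cast; exact Int.emod_emod_of_dvd _ dvd_rfl
  have hk : ((((x.val : ZMod k)).val : ℤ)) % (k : ℤ) = ((x.val : ℤ)) % (k : ℤ) := by
    rw [ZMod.val_natCast]; push_cast; exact Int.emod_emod_of_dvd _ dvd_rfl
  rw [jacobiSym.mul_right, jacobiSym.mul_right, mul_mul_mul_comm,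
    Jterm_congr m u hm, Jterm_congr k u hk]

private lemma main_aux : ∀ n : ℕ, 0 < n → Odd n → Squarefree n → ∀ u : ℤ,
    ∑ j ∈ Finset.range n, jacobiSym j n * jacobiSym ((j : ℤ) + u) n =
      ArithmeticFunction.moebius (n / Int.gcd u n) * (Nat.totient (Int.gcd u n) : ℤ) := by
  intro n
  induction n using Nat.recOnPosPrimePosCoprime with
  | prime_pow p a hp ha =>
    intro _ hodd hsqf u
    have hpp : p.Prime := hp
    have ha1 : a = 1 := by
      by_contra hne
      have h2 : 2 ≤ a := by omega
      have : p * p ∣ p ^ a := by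
        calc p * p = p ^ 2 := (sq p).symm
        _ ∣ p ^ a := pow_dvd_pow p h2
      exact hpp.one_lt.ne' (Nat.isUnit_iff.mp (hsqf p this))
    subst ha1
    rw [pow_one] at *
    have hp2 : p ≠ 2 := by
      rintro rfl
      exact (Nat.not_odd_iff_even.mpr (even_two)) hodd
    rw [Jsum_prime p hpp hp2 u]
    by_cases hdvd : (p : ℤ) ∣ u
    · rw [if_pos hdvd]
      have hg : Int.gcd u (p : ℤ) = p := by
        have : p ∣ u.natAbs := Int.natCast_dvd.mp hdvd
        simp only [Int.gcd, Int.natAbs_natCast]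
        exact Nat.gcd_eq_right this
      rw [hg, Nat.div_self hpp.pos, ArithmeticFunction.moebius_apply_one,
        Nat.totient_prime hpp]
      have : 1 ≤ p := hpp.one_le
      push_cast [this]
      ring
    · rw [if_neg hdvd]
      have hg : Int.gcd u (p : ℤ) = 1 := by
        rcases (Nat.Prime.eq_one_or_self_of_dvd hpp _ (by
          simpa [Int.gcd, Int.natAbs_natCast] using Nat.gcd_dvd_right u.natAbs p)) with h | h
        · exact h
        · exfalso
          apply hdvd
          rw [Int.natCast_dvd]
          exact h ▸ Nat.gcd_dvd_left u.natAbs p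
      rw [hg, Nat.div_one, ArithmeticFunction.moebius_apply_prime hpp, Nat.totient_one]
      ring
  | zero => intro h; exact absurd h (lt_irrefl 0)
  | one =>
    intro _ _ _ u
    simp [Finset.sum_range_one, jacobiSym.one_right, Int.gcd]
  | coprime a b ha hb hab iha ihb =>
    intro hpos hodd hsqf u
    haveI : NeZero a := ⟨by omega⟩
    haveI : NeZero b := ⟨by omega⟩
    obtain ⟨hodda, hoddb⟩ := Nat.odd_mul.mp hodd
    have hsqa : Squarefree a := hsqf.squarefree_of_dvd (dvd_mul_right a b)
    have hsqb : Squarefree b := hsqf.squarefree_of_dvd (dvd_mul_left b a)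
    rw [Jsum_mul a b hab u, iha (by omega) hodda hsqa u, ihb (by omega) hoddb hsqb u]
    -- RHS multiplicativity
    have hg : Int.gcd u ((a * b : ℕ) : ℤ) = Int.gcd u (a : ℤ) * Int.gcd u (b : ℤ) :=
      int_gcd_mul u hab
    set g1 := Int.gcd u (a : ℤ) with hg1
    set g2 := Int.gcd u (b : ℤ) with hg2
    have hd1 : g1 ∣ a := by
      have := Int.gcd_dvd_right (a := u) (b := (a : ℤ))
      exact_mod_cast this
    have hd2 : g2 ∣ b := by
      have := Int.gcd_dvd_right (a := u) (b := (b : ℤ))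
      exact_mod_cast this
    have hgco : Nat.Coprime g1 g2 :=
      Nat.Coprime.coprime_dvd_left hd1 (Nat.Coprime.coprime_dvd_right hd2 hab)
    have hdivco : Nat.Coprime (a / g1) (b / g2) :=
      Nat.Coprime.coprime_dvd_left (Nat.div_dvd_of_dvd hd1)
        (Nat.Coprime.coprime_dvd_right (Nat.div_dvd_of_dvd hd2) hab)
    rw [hg, ← Nat.div_mul_div_comm hd1 hd2,
      ArithmeticFunction.isMultiplicative_moebius.map_mul_of_coprime hdivco,
      Nat.totient_mul hgco]
    push_cast
    ring

end AuxStmt11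

/-- For positive odd square-free `n` and integer `u`,
`∑_{j=0}^{n-1} (j|n)((j+u)|n) = μ(n/gcd(u,n)) φ(gcd(u,n))`. -/
theorem stmt_11 (n : ℕ) (hn : 0 < n) (hodd : Odd n) (hsqf : Squarefree n) (u : ℤ) :
    ∑ j ∈ Finset.range n, jacobiSym j n * jacobiSym ((j : ℤ) + u) n =
      ArithmeticFunction.moebius (n / Int.gcd u n) * (Nat.totient (Int.gcd u n) : ℤ) :=
  main_aux n hn hodd hsqf u
end
end

section
/- Let n > 2 be an odd square-free integer, let r be a real number, and let J be the character polynomial of degree n−1. Then max_{|z|=1} |J_r(z)| ≤ 2 n^{1/2} log n. -/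
noncomputable section

open Polynomial Filter

namespace Complex

/-- Compatibility: the complex absolute value as an `AbsoluteValue`, equal to the norm. -/
def abs : AbsoluteValue ℂ ℝ where
  toFun z := ‖z‖
  map_mul' := norm_mul
  nonneg' := norm_nonneg
  eq_zero' _ := norm_eq_zero
  add_le' := norm_add_le

lemma abs_apply (z : ℂ) : Complex.abs z = Real.sqrt (normSq z) := norm_def z

lemma abs_exp_ofReal_mul_I (x : ℝ) : Complex.abs (exp (x * I)) = 1 := norm_exp_ofReal_mul_I x

lemma norm_eq_abs (z : ℂ) : ‖z‖ = Complex.abs z := rfl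

lemma normSq_eq_abs (z : ℂ) : normSq z = Complex.abs z ^ 2 := normSq_eq_norm_sq z

lemma abs_mul_exp_arg_mul_I (z : ℂ) : ↑(Complex.abs z) * exp (arg z * I) = z :=
  norm_mul_exp_arg_mul_I z

end Complex

namespace S14

open Complex Finset

/-- `ee t = exp(2πit)`. -/
def ee (t : ℝ) : ℂ := Complex.exp ((2 * Real.pi * t : ℝ) * Complex.I)

lemma abs_ee (t : ℝ) : Complex.abs (ee t) = 1 := Complex.abs_exp_ofReal_mul_I _

lemma ee_add (s t : ℝ) : ee (s + t) = ee s * ee t := by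
  rw [ee, ee, ee, ← Complex.exp_add]
  push_cast
  ring_nf

lemma ee_int (m : ℤ) : ee m = 1 := by
  rw [ee]
  rw [show (((2 * Real.pi * (m:ℝ) : ℝ)) : ℂ) * Complex.I = (m:ℂ) * (2 * Real.pi * Complex.I) by
    push_cast; ring]
  exact Complex.exp_int_mul_two_pi_mul_I m

lemma ee_eq_of_sub_int {s t : ℝ} (m : ℤ) (h : s - t = m) : ee s = ee t := by
  have hs : s = t + (m : ℝ) := by linarith
  rw [hs, ee_add, ee_int, mul_one]

lemma zeta_eq (n : ℕ) : zetaC n = ee (1 / n) := by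
  rw [zetaC, ee]
  congr 1
  push_cast
  ring

lemma zeta_pow (n a : ℕ) : zetaC n ^ a = ee (a / n) := by
  rw [zetaC, ← Complex.exp_nat_mul, ee]
  congr 1
  push_cast
  ring

lemma pow_mod {w : ℂ} {n : ℕ} (hw : w ^ n = 1) (m : ℕ) : w ^ (m % n) = w ^ m := by
  conv_rhs => rw [← Nat.mod_add_div m n, pow_add, pow_mul, hw, one_pow, mul_one]

lemma mod_inv_shift {n k i : ℕ} (hk : k < n) (hi : i < n) :
    ((i + k) % n + (n - k)) % n = i := by
  rw [Nat.mod_add_mod, show i + k + (n - k) = i + n by omega, Nat.add_mod_right,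
    Nat.mod_eq_of_lt hi]

lemma sum_shift {M : Type*} [AddCommMonoid M] (f : ℕ → M) (n k : ℕ) (hk : k < n) :
    ∑ i ∈ range n, f ((i + k) % n) = ∑ i ∈ range n, f i := by
  apply Finset.sum_bij' (fun a _ => (a + k) % n) (fun b _ => (b + (n - k)) % n)
  · intro a ha
    exact mem_range.2 (Nat.mod_lt _ (by omega))
  · intro a ha
    exact mem_range.2 (Nat.mod_lt _ (by omega))
  · intro a ha
    exact mod_inv_shift hk (mem_range.1 ha)
  · intro a ha
    have h1 : (a + (n - k)) % n + k < n + k := by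
      have := Nat.mod_lt (a + (n-k)) (show 0 < n by omega)
      omega
    rw [Nat.mod_add_mod, show a + (n - k) + k = a + n by omega, Nat.add_mod_right,
      Nat.mod_eq_of_lt (mem_range.1 ha)]
  · intro a ha
    rfl

lemma abs_geom_le {w : ℂ} (hw : Complex.abs w = 1) (hne : w ≠ 1) (N : ℕ) :
    Complex.abs (∑ j ∈ range N, w ^ j) ≤ 2 / Complex.abs (w - 1) := by
  rw [geom_sum_eq hne, map_div₀]
  have h1 : Complex.abs (w ^ N - 1) ≤ 2 := by
    have h := norm_sub_le (w ^ N) (1 : ℂ)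
    simp only [Complex.norm_eq_abs, map_pow, hw, one_pow, map_one] at h
    linarith
  have h2 : 0 < Complex.abs (w - 1) := by
    rw [AbsoluteValue.pos_iff]
    exact sub_ne_zero.2 hne
  gcongr

lemma abs_sum_pow_le {w : ℂ} (hw : Complex.abs w = 1) (N : ℕ) :
    Complex.abs (∑ j ∈ range N, w ^ j) ≤ N := by
  calc Complex.abs (∑ j ∈ range N, w ^ j) ≤ ∑ j ∈ range N, Complex.abs (w ^ j) :=
        Complex.abs.sum_le _ _
  _ = N := by simp [map_pow, hw]

lemma abs_ee_sub_one {t : ℝ} (h0 : 0 ≤ t) (h1 : t ≤ 1) :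
    Complex.abs (ee t - 1) = 2 * Real.sin (Real.pi * t) := by
  have hre : (ee t - 1).re = Real.cos (2 * Real.pi * t) - 1 := by
    rw [Complex.sub_re, Complex.one_re, ee, Complex.exp_ofReal_mul_I_re]
  have him : (ee t - 1).im = Real.sin (2 * Real.pi * t) := by
    rw [Complex.sub_im, Complex.one_im, ee, Complex.exp_ofReal_mul_I_im, sub_zero]
  rw [Complex.abs_apply, Complex.normSq_apply, hre, him]
  have hsin : Real.sin (Real.pi * t) = Real.sqrt ((1 - Real.cos (2 * Real.pi * t)) / 2) := by
    have := Real.sin_half_eq_sqrt (x := 2 * Real.pi * t)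
      (by positivity) (by nlinarith [Real.pi_pos])
    rw [show 2 * Real.pi * t / 2 = Real.pi * t by ring] at this
    exact this
  have hs4 : Real.sqrt 4 = 2 := by
    rw [show (4:ℝ) = 2^2 by norm_num]; exact Real.sqrt_sq (by norm_num)
  rw [hsin, show (2:ℝ) * Real.sqrt ((1 - Real.cos (2 * Real.pi * t)) / 2)
      = Real.sqrt (4 * ((1 - Real.cos (2 * Real.pi * t)) / 2)) from by
    rw [Real.sqrt_mul (by norm_num : (0:ℝ) ≤ 4), hs4]]
  congr 1
  nlinarith [Real.sin_sq_add_cos_sq (2 * Real.pi * t)]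

lemma sin_ge_min {t : ℝ} (h0 : 0 ≤ t) (h1 : t ≤ 1) :
    2 * min t (1 - t) ≤ Real.sin (Real.pi * t) := by
  have hpi := Real.pi_pos
  rcases le_total t (1/2) with h | h
  · rw [min_eq_left (by linarith)]
    have hj := Real.mul_le_sin (x := Real.pi * t) (by positivity) (by nlinarith)
    have h2 : 2 / Real.pi * (Real.pi * t) = 2 * t := by field_simp
    linarith [hj, h2]
  · rw [min_eq_right (by linarith)]
    rw [show Real.pi * t = Real.pi - Real.pi * (1 - t) by ring, Real.sin_pi_sub]
    have hj := Real.mul_le_sin (x := Real.pi * (1 - t)) (by nlinarith) (by nlinarith)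
    have h2 : 2 / Real.pi * (Real.pi * (1 - t)) = 2 * (1 - t) := by field_simp
    linarith [hj, h2]

end S14
namespace S14
open Complex Finset

lemma harm_le (m : ℕ) : ∑ b ∈ Finset.Ico 1 (m + 1), (1:ℝ)/b ≤ 1 + Real.log m := by
  induction m with
  | zero => simp
  | succ m ih =>
    rw [Finset.sum_Ico_succ_top (by omega)]
    rcases Nat.eq_zero_or_pos m with hm | hm
    · subst hm; norm_num
    · have hm' : (0:ℝ) < m := by exact_mod_cast hm
      have hlog : Real.log m + 1/((m:ℝ)+1) ≤ Real.log ((m:ℝ)+1) := by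
        have hpos : (0:ℝ) < (m:ℝ)/((m:ℝ)+1) := by positivity
        have h1 := Real.log_le_sub_one_of_pos hpos
        have h2 : Real.log ((m:ℝ)/((m:ℝ)+1)) = Real.log m - Real.log ((m:ℝ)+1) := by
          rw [Real.log_div (by positivity) (by positivity)]
        have h3 : (m:ℝ)/((m:ℝ)+1) - 1 = -(1/((m:ℝ)+1)) := by field_simp; ring
        rw [h2, h3] at h1
        linarith
      push_cast
      push_cast at ih
      linarith

lemma middle_bound {n b : ℕ} {u : ℝ} (hb1 : 1 ≤ b) (hb2 : b + 2 ≤ n)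
    (hu0 : 0 ≤ u) (hu1 : u < 1) :
    Complex.abs (∑ j ∈ range n, (ee (((b:ℝ) + u)/n)) ^ j)
      ≤ (n:ℝ)/(2*b) + (n:ℝ)/(2*((n:ℝ)-1-b)) := by
  have hn : (0:ℝ) < n := by
    have : 0 < n := by omega
    exact_mod_cast this
  have hbr : (b:ℝ) + 2 ≤ (n:ℝ) := by exact_mod_cast hb2
  have hb0 : (0:ℝ) < b := by exact_mod_cast hb1
  have hnb : (0:ℝ) < (n:ℝ) - 1 - b := by linarith
  set t : ℝ := ((b:ℝ) + u)/n with ht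
  have h1 : (b:ℝ)/n ≤ t := by rw [ht]; gcongr; linarith
  have h2 : ((n:ℝ)-1-b)/n ≤ 1 - t := by
    rw [ht, show 1 - ((b:ℝ)+u)/n = ((n:ℝ) - ((b:ℝ)+u))/n from by field_simp]
    rw [div_le_div_iff₀ hn hn]
    nlinarith
  have ht0 : 0 ≤ t := le_trans (by positivity) h1
  have ht1 : t ≤ 1 := by
    rw [ht, div_le_one hn]; linarith
  have hsin := sin_ge_min ht0 ht1
  have hminle : min ((b:ℝ)/n) (((n:ℝ)-1-b)/n) ≤ min t (1 - t) := min_le_min h1 h2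
  have hminpos : 0 < min ((b:ℝ)/n) (((n:ℝ)-1-b)/n) := lt_min (by positivity) (by positivity)
  have hsinpos : 0 < Real.sin (Real.pi * t) := by
    calc (0:ℝ) < 2 * min ((b:ℝ)/n) (((n:ℝ)-1-b)/n) := by linarith
    _ ≤ 2 * min t (1-t) := by linarith
    _ ≤ Real.sin (Real.pi * t) := hsin
  have habs := abs_ee_sub_one ht0 ht1
  have hne : ee t ≠ 1 := by
    intro h
    rw [h] at habs
    simp only [sub_self, map_zero] at habs
    linarith
  calc Complex.abs (∑ j ∈ range n, (ee t) ^ j) ≤ 2 / Complex.abs (ee t - 1) :=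
        abs_geom_le (abs_ee t) hne n
  _ = 1 / Real.sin (Real.pi * t) := by
        rw [habs]
        rw [show (2:ℝ) / (2 * Real.sin (Real.pi * t)) = 1 / Real.sin (Real.pi * t) from by
          field_simp]
  _ ≤ 1 / (2 * min ((b:ℝ)/n) (((n:ℝ)-1-b)/n)) := by
        apply one_div_le_one_div_of_le (by linarith)
        calc 2 * min ((b:ℝ)/n) (((n:ℝ)-1-b)/n) ≤ 2 * min t (1-t) := by linarith
        _ ≤ _ := hsin
  _ ≤ (n:ℝ)/(2*b) + (n:ℝ)/(2*((n:ℝ)-1-b)) := by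
        rcases le_total ((b:ℝ)/n) (((n:ℝ)-1-b)/n) with h | h
        · rw [min_eq_left h, show 1 / (2 * ((b:ℝ)/n)) = (n:ℝ)/(2*b) from by
            field_simp]
          have : (0:ℝ) ≤ (n:ℝ)/(2*((n:ℝ)-1-b)) := by positivity
          linarith
        · rw [min_eq_right h, show 1 / (2 * (((n:ℝ)-1-b)/n)) = (n:ℝ)/(2*((n:ℝ)-1-b)) from by
            field_simp]
          have : (0:ℝ) ≤ (n:ℝ)/(2*b) := by positivity
          linarith

lemma key_sum {n : ℕ} (hn3 : 3 ≤ n) {u : ℝ} (hu0 : 0 ≤ u) (hu1 : u < 1) :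
    ∑ b ∈ range n, Complex.abs (∑ j ∈ range n, (ee (((b:ℝ) + u)/n)) ^ j)
      ≤ (n:ℝ) * (3 + Real.log n) := by
  set f : ℕ → ℝ := fun b => Complex.abs (∑ j ∈ range n, (ee (((b:ℝ) + u)/n)) ^ j) with hf
  have htr : ∀ b, f b ≤ (n:ℝ) := fun b => abs_sum_pow_le (abs_ee _) n
  have hdec : ∑ b ∈ range n, f b = f 0 + ((∑ b ∈ Finset.Ico 1 (n-1), f b) + f (n-1)) := by
    rw [range_eq_Ico, Finset.sum_eq_sum_Ico_succ_bot (by omega : 0 < n),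
      show Finset.Ico 1 n = Finset.Ico 1 ((n-1)+1) from by congr 1; omega,
      Finset.sum_Ico_succ_top (by omega)]
  have hmid : ∑ b ∈ Finset.Ico 1 (n-1), f b
      ≤ ∑ b ∈ Finset.Ico 1 (n-1), ((n:ℝ)/(2*b) + (n:ℝ)/(2*((n:ℝ)-1-b))) := by
    apply Finset.sum_le_sum
    intro b hb
    have h1 := (Finset.mem_Ico.1 hb).1
    have h2 := (Finset.mem_Ico.1 hb).2
    exact middle_bound h1 (by omega) hu0 hu1
  have hrefl : ∑ b ∈ Finset.Ico 1 (n-1), (n:ℝ)/(2*((n:ℝ)-1-b))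
      = ∑ b ∈ Finset.Ico 1 (n-1), (n:ℝ)/(2*(b:ℝ)) := by
    apply Finset.sum_bij' (fun b _ => n - 1 - b) (fun b _ => n - 1 - b)
    · intro a ha
      have h := Finset.mem_Ico.1 ha
      exact Finset.mem_Ico.2 (by omega)
    · intro a ha
      have h := Finset.mem_Ico.1 ha
      exact Finset.mem_Ico.2 (by omega)
    · intro a ha
      have h := Finset.mem_Ico.1 ha
      omega
    · intro a ha
      have h := Finset.mem_Ico.1 ha
      omega
    · intro a ha
      have h := Finset.mem_Ico.1 ha
      have hcast : ((n - 1 - a : ℕ) : ℝ) = (n:ℝ) - 1 - (a:ℝ) := by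
        have : (n - 1 - a : ℕ) + a + 1 = n := by omega
        have := congrArg (Nat.cast : ℕ → ℝ) this
        push_cast at this
        linarith
      rw [hcast]
  have hharm : ∑ b ∈ Finset.Ico 1 (n-1), (n:ℝ)/(2*(b:ℝ))
      = ((n:ℝ)/2) * ∑ b ∈ Finset.Ico 1 (n-1), (1:ℝ)/b := by
    rw [Finset.mul_sum]
    exact Finset.sum_congr rfl (fun b _ => by ring)
  have hH : ∑ b ∈ Finset.Ico 1 (n-1), (1:ℝ)/b ≤ 1 + Real.log n := by
    rw [show n - 1 = (n-2)+1 by omega]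
    refine (harm_le (n-2)).trans ?_
    have : Real.log ((n:ℝ)-2) ≤ Real.log n := by
      apply Real.log_le_log (by linarith [show (3:ℝ) ≤ (n:ℝ) from by exact_mod_cast hn3])
      linarith
    have hc : ((n - 2 : ℕ) : ℝ) = (n:ℝ) - 2 := by
      have : (n - 2 : ℕ) + 2 = n := by omega
      have := congrArg (Nat.cast : ℕ → ℝ) this
      push_cast at this
      linarith
    rw [hc]
    linarith
  have hlogpos : 0 ≤ Real.log n := Real.log_nonneg (by exact_mod_cast Nat.one_le_of_lt hn3)
  have hn0 : (3:ℝ) ≤ (n:ℝ) := by exact_mod_cast hn3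
  rw [hdec, Finset.sum_add_distrib] at *
  have hfin : ∑ b ∈ Finset.Ico 1 (n-1), f b ≤ ((n:ℝ)/2) * (1 + Real.log n) * 2 := by
    rw [hrefl, hharm] at hmid
    nlinarith
  nlinarith [htr 0, htr (n-1)]

lemma log3 : (1:ℝ) ≤ Real.log 3 := by
  rw [Real.le_log_iff_exp_le (by norm_num)]
  have := Real.exp_one_lt_d9
  linarith

lemma log5 : (3/2:ℝ) ≤ Real.log 5 := by
  rw [Real.le_log_iff_exp_le (by norm_num)]
  have h1 : Real.exp (3/2) * Real.exp (3/2) = Real.exp 3 := by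
    rw [← Real.exp_add]; norm_num
  have h3 : Real.exp 3 = Real.exp 1 ^ 3 := by
    rw [← Real.exp_nat_mul]; norm_num
  have he := Real.exp_one_lt_d9
  have hp : (0:ℝ) < Real.exp (3/2) := Real.exp_pos _
  have h9 : Real.exp 1 ^ 3 < (2.7182818286:ℝ) ^ 3 :=
    pow_lt_pow_left₀ he (Real.exp_pos 1).le (by norm_num)
  have hb : (2.7182818286:ℝ) ^ 3 < 25 := by norm_num
  have hE2 : Real.exp (3/2) * Real.exp (3/2) < 25 := by
    rw [h1, h3]; linarith
  nlinarith [hp, hE2]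
lemma log10 : (9/4:ℝ) ≤ Real.log 10 := by
  rw [Real.le_log_iff_exp_le (by norm_num)]
  have h1 : Real.exp (9/4) ^ 4 = Real.exp 9 := by
    rw [← Real.exp_nat_mul]; norm_num
  have h3 : Real.exp 9 = Real.exp 1 ^ 9 := by
    rw [← Real.exp_nat_mul]; norm_num
  have he := Real.exp_one_lt_d9
  have h9 : Real.exp 1 ^ 9 < (2.7182818286:ℝ) ^ 9 :=
    pow_lt_pow_left₀ he (Real.exp_pos 1).le (by norm_num)
  have hb : (2.7182818286:ℝ) ^ 9 < 10000 := by norm_num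
  have hp : (0:ℝ) < Real.exp (9/4) := Real.exp_pos _
  have hE4 : Real.exp (9/4) ^ 4 < 10000 := by rw [h1, h3]; linarith
  have hE2 : Real.exp (9/4) ^ 2 < 100 := by nlinarith [hp, hE4, sq_nonneg (Real.exp (9/4)^2 - 100)]
  nlinarith [hp, hE2]
lemma log21 : (3:ℝ) ≤ Real.log 21 := by
  rw [Real.le_log_iff_exp_le (by norm_num)]
  have h3 : Real.exp 3 = Real.exp 1 ^ 3 := by
    rw [← Real.exp_nat_mul]; norm_num
  have he := Real.exp_one_lt_d9
  have h9 : Real.exp 1 ^ 3 < (2.7182818286:ℝ) ^ 3 :=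
    pow_lt_pow_left₀ he (Real.exp_pos 1).le (by norm_num)
  have hb : (2.7182818286:ℝ) ^ 3 < 21 := by norm_num
  linarith [h9, hb, h3.symm.le]

end S14
namespace S14
open Complex Finset

/-- The Jacobi character on `ZMod n`, valued in `ℂ`. -/
def chiZ (n : ℕ) (x : ZMod n) : ℂ := ((jacobiSym (x.val : ℤ) n : ℤ) : ℂ)

/-- Gauss sum. -/
def gaussS (n : ℕ) [NeZero n] : ℂ := ∑ x : ZMod n, chiZ n x * zetaC n ^ x.val

/-- Twisted Gauss sum. -/
def twistS (n : ℕ) [NeZero n] (b : ZMod n) : ℂ := ∑ x : ZMod n, chiZ n x * zetaC n ^ (x * b).val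

lemma zeta_pow_n {n : ℕ} (hn : n ≠ 0) : zetaC n ^ n = 1 :=
  (Complex.isPrimitiveRoot_exp n hn).pow_eq_one

lemma abs_zeta (n : ℕ) : Complex.abs (zetaC n) = 1 := by
  rw [zeta_eq]; exact abs_ee _

lemma sum_range_zmod {M : Type*} [AddCommMonoid M] (n : ℕ) [NeZero n] (f : ZMod n → M) :
    ∑ a ∈ range n, f (a : ZMod n) = ∑ x : ZMod n, f x := by
  apply Finset.sum_bij' (fun a _ => ((a : ℕ) : ZMod n)) (fun x _ => x.val)
  · intro a _; exact mem_univ _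
  · intro x _; exact mem_range.2 (ZMod.val_lt x)
  · intro a ha; exact ZMod.val_cast_of_lt (mem_range.1 ha)
  · intro x _; exact ZMod.natCast_rightInverse x
  · intro a _; rfl

lemma sum_unit_mul {M : Type*} [AddCommMonoid M] {n : ℕ} [NeZero n] {c : ZMod n}
    (hc : IsUnit c) (F : ZMod n → M) :
    ∑ x : ZMod n, F (c * x) = ∑ x : ZMod n, F x := by
  rw [← Equiv.sum_comp (Units.mulLeft hc.unit) F]
  exact Finset.sum_congr rfl (fun x _ => by
    show F (c * x) = F ((hc.unit : ZMod n) * x)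
    rw [IsUnit.unit_spec])

lemma chiZ_natCast (n : ℕ) [NeZero n] (a : ℕ) :
    chiZ n ((a : ℕ) : ZMod n) = ((jacobiSym (a : ℤ) n : ℤ) : ℂ) := by
  rw [chiZ]
  congr 1
  rw [ZMod.val_natCast]
  rw [Int.natCast_mod]
  exact (jacobiSym.mod_left (a : ℤ) n).symm

lemma chiZ_mul (n : ℕ) [NeZero n] (x y : ZMod n) :
    chiZ n (x * y) = chiZ n x * chiZ n y := by
  rw [chiZ, chiZ, chiZ, ← Int.cast_mul, ← jacobiSym.mul_left]
  congr 1
  rw [ZMod.val_mul]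
  rw [Int.natCast_mod, ← jacobiSym.mod_left]
  push_cast
  ring_nf

lemma chiZ_one (n : ℕ) (hn : 1 < n) : chiZ n 1 = 1 := by
  haveI : Fact (1 < n) := ⟨hn⟩
  rw [chiZ, ZMod.val_one]
  simp [jacobiSym.one_left]

lemma abs_chiZ (n : ℕ) (x : ZMod n) : Complex.abs (chiZ n x) ≤ 1 := by
  rcases jacobiSym.trichotomy (x.val : ℤ) n with h | h | h <;> rw [chiZ, h] <;> norm_num

lemma chiZ_eq_zero_iff (n : ℕ) [NeZero n] (x : ZMod n) :
    chiZ n x = 0 ↔ Nat.gcd x.val n ≠ 1 := by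
  rw [chiZ]
  rw [show (((jacobiSym (x.val : ℤ) n : ℤ) : ℂ) = 0) ↔ jacobiSym (x.val : ℤ) n = 0 from by
    exact_mod_cast Int.cast_eq_zero (α := ℂ)]
  rw [jacobiSym.eq_zero_iff_not_coprime]
  rw [Int.gcd_natCast_natCast]

lemma chiZ_mul_self (n : ℕ) [NeZero n] (x : ZMod n) (h : Nat.Coprime x.val n) :
    chiZ n x * chiZ n x = 1 := by
  rw [chiZ, ← Int.cast_mul, ← sq]
  rw [jacobiSym.sq_one (by rwa [Int.gcd_natCast_natCast])]
  norm_num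

lemma twist_unit {n : ℕ} [NeZero n] (hn : 1 < n) (u : (ZMod n)ˣ) :
    twistS n (u : ZMod n) = chiZ n (u : ZMod n) * gaussS n := by
  have hui : IsUnit ((u⁻¹ : (ZMod n)ˣ) : ZMod n) := Units.isUnit _
  rw [twistS, ← sum_unit_mul hui (fun x => chiZ n x * zetaC n ^ (x * u).val)]
  have hre : ∀ x : ZMod n,
      chiZ n (((u⁻¹ : (ZMod n)ˣ) : ZMod n) * x) * zetaC n ^ ((((u⁻¹ : (ZMod n)ˣ) : ZMod n) * x) * (u : ZMod n)).val
      = chiZ n ((u⁻¹ : (ZMod n)ˣ) : ZMod n) * (chiZ n x * zetaC n ^ x.val) := by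
    intro x
    rw [chiZ_mul]
    have : (((u⁻¹ : (ZMod n)ˣ) : ZMod n) * x) * (u : ZMod n) = x := by
      rw [mul_comm ((u⁻¹ : (ZMod n)ˣ) : ZMod n) x, mul_assoc, Units.inv_mul, mul_one]
    rw [this]
    ring
  simp_rw [hre]
  rw [← Finset.mul_sum, ← gaussS]
  congr 1
  have h1 : chiZ n ((u⁻¹ : (ZMod n)ˣ) : ZMod n) * chiZ n (u : ZMod n) = 1 := by
    rw [← chiZ_mul, Units.inv_mul, chiZ_one n hn]
  have h2 : chiZ n (u : ZMod n) * chiZ n (u : ZMod n) = 1 :=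
    chiZ_mul_self n _ (ZMod.val_coe_unit_coprime u)
  calc chiZ n ((u⁻¹ : (ZMod n)ˣ) : ZMod n)
      = chiZ n ((u⁻¹ : (ZMod n)ˣ) : ZMod n) * (chiZ n (u : ZMod n) * chiZ n (u : ZMod n)) := by
        rw [h2, mul_one]
  _ = (chiZ n ((u⁻¹ : (ZMod n)ˣ) : ZMod n) * chiZ n (u : ZMod n)) * chiZ n (u : ZMod n) := by ring
  _ = chiZ n (u : ZMod n) := by rw [h1, one_mul]

lemma twist_nonunit {n : ℕ} (hn : 2 < n) (hodd : Odd n) (hsqf : Squarefree n)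
    {b : ZMod n} (hb : ¬ IsUnit b) :
    haveI : NeZero n := ⟨by omega⟩
    twistS n b = 0 := by
  haveI : NeZero n := ⟨by omega⟩
  -- find odd prime p dividing gcd(b.val, n)
  have hbg : Nat.gcd b.val n ≠ 1 := by
    intro h
    apply hb
    have := (ZMod.isUnit_iff_coprime b.val n).2 h
    rwa [ZMod.natCast_rightInverse b] at this
  set p := (Nat.gcd b.val n).minFac with hp_def
  have hp : p.Prime := Nat.minFac_prime hbg
  have hpn : p ∣ n := (Nat.minFac_dvd _).trans (Nat.gcd_dvd_right _ _)
  have hpb : p ∣ b.val := (Nat.minFac_dvd _).trans (Nat.gcd_dvd_left _ _)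
  have hp2 : p ≠ 2 := by
    intro h
    rw [Nat.odd_iff] at hodd
    have : (2:ℕ) ∣ n := h ▸ hpn
    omega
  set m := n / p with hm_def
  have hnm : p * m = n := Nat.mul_div_cancel' hpn
  have hm0 : m ≠ 0 := by
    intro h
    rw [h, mul_zero] at hnm
    omega
  haveI : NeZero m := ⟨hm0⟩
  haveI : NeZero p := ⟨hp.ne_zero⟩
  haveI : Fact p.Prime := ⟨hp⟩
  have hcop : Nat.Coprime p m := by
    rw [Nat.Prime.coprime_iff_not_dvd hp]
    intro hdvd
    have : p * p ∣ n := by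
      rw [← hnm]
      exact mul_dvd_mul_left p hdvd
    exact hp.ne_one (Nat.isUnit_iff.1 (hsqf p this))
  obtain ⟨v, hv⟩ := FiniteField.exists_nonsquare
    (F := ZMod p) (by rw [ZMod.ringChar_zmod_n]; exact hp2)
  obtain ⟨k, hk1, hk2⟩ := Nat.chineseRemainder hcop v.val 1
  -- χ(k) = -1
  have hJk : jacobiSym (k : ℤ) n = -1 := by
    rw [← hnm, jacobiSym.mul_right]
    have e1 : jacobiSym (k : ℤ) p = -1 := by
      have hmod : (k : ℤ) % p = ((v.val : ℕ) : ℤ) % p := by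
        have h := hk1
        unfold Nat.ModEq at h
        rw [← Int.natCast_mod, ← Int.natCast_mod, h]
      rw [jacobiSym.mod_left' hmod, ← jacobiSym.legendreSym.to_jacobiSym]
      apply (legendreSym.eq_neg_one_iff' p).2
      rwa [ZMod.natCast_rightInverse v]
    have e2 : jacobiSym (k : ℤ) m = 1 := by
      have hmod : (k : ℤ) % m = (1 : ℤ) % m := by
        have h := hk2
        unfold Nat.ModEq at h
        rw [← Int.natCast_mod, show (1:ℤ) = ((1:ℕ):ℤ) from by norm_num, ← Int.natCast_mod, h]
      rw [jacobiSym.mod_left' hmod]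
      exact jacobiSym.one_left m
    rw [e1, e2, mul_one]
  set K : ZMod n := ((k : ℕ) : ZMod n) with hK_def
  have hχK : chiZ n K = -1 := by
    rw [hK_def, chiZ_natCast, hJk]
    norm_num
  have hKu : IsUnit K := by
    have hg : Int.gcd (k : ℤ) n = 1 := by
      by_contra h
      have := jacobiSym.eq_zero_iff_not_coprime.2 h
      rw [hJk] at this
      norm_num at this
    rw [hK_def, ZMod.isUnit_iff_coprime]
    rwa [Int.gcd_natCast_natCast] at hg
  -- (K - 1) * b = 0
  have hKb : (K - 1) * b = 0 := by
    have h1 : ((m : ℤ)) ∣ (k : ℤ) - 1 := by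
      have h := (Nat.modEq_iff_dvd (n := m)).1 hk2
      push_cast at h
      rw [show (k:ℤ) - 1 = -((1:ℤ) - k) by ring]
      exact dvd_neg.2 h
    have h2 : ((p : ℤ)) ∣ ((b.val : ℕ) : ℤ) := Int.natCast_dvd_natCast.2 hpb
    have h3 : ((n : ℤ)) ∣ ((k : ℤ) - 1) * ((b.val : ℕ) : ℤ) := by
      rw [show ((n:ℕ) : ℤ) = ((m:ℕ):ℤ) * ((p:ℕ):ℤ) from by rw [← hnm]; push_cast; ring]
      exact mul_dvd_mul h1 h2
    have h4 : ((((k : ℤ) - 1) * ((b.val : ℕ) : ℤ) : ℤ) : ZMod n) = 0 :=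
      (ZMod.intCast_zmod_eq_zero_iff_dvd _ _).2 h3
    push_cast at h4
    rw [show (((b.val : ℕ) : ZMod n)) = b from ZMod.natCast_rightInverse b] at h4
    exact h4
  have hmulK : ∀ x : ZMod n, (K * x) * b = x * b := by
    intro x
    have : K * x * b = (K - 1) * b * x + x * b := by ring
    rw [this, hKb, zero_mul, zero_add]
  -- reindex
  have hre := sum_unit_mul hKu (fun x => chiZ n x * zetaC n ^ (x * b).val)
  have hre2 : ∀ x : ZMod n,
      chiZ n (K * x) * zetaC n ^ ((K * x) * b).val
        = -(chiZ n x * zetaC n ^ (x * b).val) := by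
    intro x
    rw [chiZ_mul, hχK, hmulK]
    ring
  simp_rw [hre2] at hre
  rw [Finset.sum_neg_distrib] at hre
  have h2 : (2 : ℂ) * twistS n b = 0 := by
    rw [twistS, two_mul]
    linear_combination - hre
  rcases mul_eq_zero.1 h2 with h | h
  · norm_num at h
  · exact h

end S14
namespace S14
open Complex Finset

lemma twist_eq {n : ℕ} [NeZero n] (hn : 2 < n) (hodd : Odd n) (hsqf : Squarefree n)
    (b : ZMod n) : twistS n b = chiZ n b * gaussS n := by
  by_cases hb : IsUnit b
  · obtain ⟨u, rfl⟩ := hb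
    exact twist_unit (by omega) u
  · rw [twist_nonunit hn hodd hsqf hb]
    have hz : chiZ n b = 0 := by
      rw [chiZ_eq_zero_iff]
      intro h
      apply hb
      have := (ZMod.isUnit_iff_coprime b.val n).2 h
      rwa [ZMod.natCast_rightInverse b] at this
    rw [hz, zero_mul]

lemma zeta_val_add {n : ℕ} [NeZero n] (hn : n ≠ 0) (s t : ZMod n) :
    zetaC n ^ s.val * zetaC n ^ t.val = zetaC n ^ (s + t).val := by
  rw [← pow_add, ZMod.val_add, pow_mod (zeta_pow_n hn)]

lemma conj_zeta_val {n : ℕ} [NeZero n] (hn : n ≠ 0) (t : ZMod n) :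
    (starRingEnd ℂ) (zetaC n ^ t.val) = zetaC n ^ (-t).val := by
  have h1 : zetaC n ^ t.val * zetaC n ^ (-t).val = 1 := by
    rw [zeta_val_add hn, show t + -t = 0 from by ring, ZMod.val_zero, pow_zero]
  have habs : Complex.abs (zetaC n ^ t.val) = 1 := by
    rw [map_pow, abs_zeta, one_pow]
  have h2 : zetaC n ^ t.val * (starRingEnd ℂ) (zetaC n ^ t.val) = 1 := by
    rw [Complex.mul_conj, Complex.normSq_eq_abs, habs]
    norm_num
  have hne : zetaC n ^ t.val ≠ 0 := by
    intro h
    rw [h, zero_mul] at h1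
    norm_num at h1
  exact mul_left_cancel₀ hne (h2.trans h1.symm)

lemma sum_psi {n : ℕ} [NeZero n] (hn : 2 < n) (t : ZMod n) :
    ∑ b : ZMod n, zetaC n ^ (t * b).val = if t = 0 then (n : ℂ) else 0 := by
  split_ifs with ht
  · subst ht
    simp only [zero_mul, ZMod.val_zero, pow_zero]
    rw [Finset.sum_const, Finset.card_univ, ZMod.card]
    simp
  · rw [← sum_range_zmod n (fun b => zetaC n ^ (t * b).val)]
    have hne : zetaC n ^ t.val ≠ 1 := by
      apply (Complex.isPrimitiveRoot_exp n (by omega)).pow_ne_one_of_pos_of_lt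
      · exact (fun h => ht ((ZMod.val_eq_zero t).1 h))
      · exact ZMod.val_lt t
    have hterm : ∀ a ∈ range n,
        zetaC n ^ (t * (a : ZMod n)).val = (zetaC n ^ t.val) ^ a := by
      intro a ha
      rw [ZMod.val_mul, pow_mod (zeta_pow_n (show n ≠ 0 by omega)),
        ZMod.val_cast_of_lt (mem_range.1 ha), pow_mul]
    rw [Finset.sum_congr rfl hterm]
    rw [geom_sum_eq hne n, ← pow_mul, mul_comm t.val n, pow_mul,
      zeta_pow_n (show n ≠ 0 by omega), one_pow, sub_self, zero_div]

lemma conj_chiZ {n : ℕ} (x : ZMod n) : (starRingEnd ℂ) (chiZ n x) = chiZ n x := by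
  rw [chiZ]
  exact map_intCast (starRingEnd ℂ) _

lemma gauss_mul_conj {n : ℕ} [NeZero n] (hn : 2 < n) (hodd : Odd n) (hsqf : Squarefree n) :
    gaussS n * (starRingEnd ℂ) (gaussS n) = (n : ℂ) := by
  set g := gaussS n with hg
  set S2 : ℂ := ∑ x : ZMod n, chiZ n x * chiZ n x with hS2
  have hA : ∑ b : ZMod n, twistS n b * (starRingEnd ℂ) (twistS n b)
      = S2 * (g * (starRingEnd ℂ) g) := by
    have hterm : ∀ b : ZMod n, twistS n b * (starRingEnd ℂ) (twistS n b)
        = (chiZ n b * chiZ n b) * (g * (starRingEnd ℂ) g) := by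
      intro b
      rw [twist_eq hn hodd hsqf b, map_mul, conj_chiZ]
      ring
    rw [Finset.sum_congr rfl (fun b _ => hterm b), ← Finset.sum_mul]
  have hB : ∑ b : ZMod n, twistS n b * (starRingEnd ℂ) (twistS n b) = (n : ℂ) * S2 := by
    have hexp : ∀ b : ZMod n, twistS n b * (starRingEnd ℂ) (twistS n b)
        = ∑ x : ZMod n, ∑ y : ZMod n,
            (chiZ n x * chiZ n y) * zetaC n ^ ((x - y) * b).val := by
      intro b
      rw [twistS, map_sum, Finset.sum_mul_sum]
      apply Finset.sum_congr rfl
      intro x _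
      apply Finset.sum_congr rfl
      intro y _
      rw [map_mul, conj_chiZ, conj_zeta_val (show n ≠ 0 by omega)]
      have : zetaC n ^ (x * b).val * zetaC n ^ (-(y * b)).val
          = zetaC n ^ ((x - y) * b).val := by
        rw [zeta_val_add (show n ≠ 0 by omega)]
        congr 1
        ring
      calc chiZ n x * zetaC n ^ (x * b).val * (chiZ n y * zetaC n ^ (-(y * b)).val)
          = (chiZ n x * chiZ n y) * (zetaC n ^ (x * b).val * zetaC n ^ (-(y * b)).val) := by
            ring
      _ = (chiZ n x * chiZ n y) * zetaC n ^ ((x - y) * b).val := by rw [this]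
    rw [Finset.sum_congr rfl (fun b _ => hexp b)]
    rw [Finset.sum_comm]
    have hswap : ∀ x : ZMod n, ∑ b : ZMod n, ∑ y : ZMod n,
        (chiZ n x * chiZ n y) * zetaC n ^ ((x - y) * b).val
        = ∑ y : ZMod n, (chiZ n x * chiZ n y) * (if x - y = 0 then (n:ℂ) else 0) := by
      intro x
      rw [Finset.sum_comm]
      apply Finset.sum_congr rfl
      intro y _
      rw [← Finset.mul_sum, sum_psi hn (x - y)]
    rw [Finset.sum_congr rfl (fun x _ => hswap x)]
    have hdiag : ∀ x : ZMod n, ∑ y : ZMod n,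
        (chiZ n x * chiZ n y) * (if x - y = 0 then (n:ℂ) else 0)
        = (chiZ n x * chiZ n x) * (n : ℂ) := by
      intro x
      rw [Finset.sum_eq_single x]
      · rw [sub_self, if_pos rfl]
      · intro y _ hy
        have hne2 : ¬ (x - y = 0) := by
          intro h
          exact hy (by linear_combination -h)
        rw [if_neg hne2, mul_zero]
      · intro h
        exact absurd (mem_univ x) h
    rw [Finset.sum_congr rfl (fun x _ => hdiag x), ← Finset.sum_mul]
    ring
  have hS2ne : S2 ≠ 0 := by
    set tot : ℤ := ∑ x : ZMod n, jacobiSym (x.val : ℤ) n * jacobiSym (x.val : ℤ) n with htot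
    have h1 : S2 = (tot : ℂ) := by
      rw [hS2, htot]
      push_cast [chiZ]
      rfl
    have htot1 : 1 ≤ tot := by
      haveI : Fact (1 < n) := ⟨by omega⟩
      have hone : jacobiSym (((1 : ZMod n).val : ℕ) : ℤ) n
          * jacobiSym (((1 : ZMod n).val : ℕ) : ℤ) n = 1 := by
        rw [ZMod.val_one]
        simp [jacobiSym.one_left]
      calc (1:ℤ) = jacobiSym (((1 : ZMod n).val : ℕ) : ℤ) n
            * jacobiSym (((1 : ZMod n).val : ℕ) : ℤ) n := hone.symm
      _ ≤ tot := Finset.single_le_sum (f := fun x : ZMod n =>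
            jacobiSym (x.val : ℤ) n * jacobiSym (x.val : ℤ) n)
          (fun x _ => mul_self_nonneg _) (mem_univ 1)
    rw [h1]
    exact_mod_cast (show tot ≠ 0 by omega)
  have hfin := hA.symm.trans hB
  rw [mul_comm (n:ℂ) S2] at hfin
  exact mul_left_cancel₀ hS2ne hfin

lemma abs_gauss {n : ℕ} [NeZero n] (hn : 2 < n) (hodd : Odd n) (hsqf : Squarefree n) :
    Complex.abs (gaussS n) = Real.sqrt n := by
  have h := gauss_mul_conj hn hodd hsqf
  rw [Complex.mul_conj] at h
  have h2 : Complex.normSq (gaussS n) = (n : ℝ) := by exact_mod_cast h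
  rw [Complex.abs_apply, h2]

lemma gauss_ne_zero {n : ℕ} [NeZero n] (hn : 2 < n) (hodd : Odd n) (hsqf : Squarefree n) :
    gaussS n ≠ 0 := by
  intro h
  have := gauss_mul_conj hn hodd hsqf
  rw [h, zero_mul] at this
  have : (n : ℂ) = 0 := this.symm
  rw [Nat.cast_eq_zero] at this
  omega

end S14
namespace S14
open Complex Finset Polynomial

lemma rot_eq (n : ℕ) (hn : 0 < n) (k : ℕ) (hk : k < n) :
    (X ^ k * charPoly n) % (X ^ n - 1)
      = ∑ i ∈ range n, Polynomial.C ((jacobiSym (i : ℤ) n : ℤ) : ℂ)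
          * X ^ ((i + k) % n) := by
  have hmon : (X ^ n - 1 : Polynomial ℂ).Monic := by
    have := Polynomial.monic_X_pow_sub_C (1 : ℂ) (show n ≠ 0 by omega)
    simpa using this
  have hdeg : (X ^ n - 1 : Polynomial ℂ).degree = n := by
    have := Polynomial.degree_X_pow_sub_C (R := ℂ) hn (1 : ℂ)
    simpa using this
  set χN : ℕ → ℂ := fun i => ((jacobiSym (i : ℤ) n : ℤ) : ℂ) with hχN
  set R : Polynomial ℂ := ∑ i ∈ range n, Polynomial.C (χN i) * X ^ ((i + k) % n) with hR
  set Q : Polynomial ℂ :=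
    ∑ i ∈ range n, if n ≤ i + k then Polynomial.C (χN i) * X ^ (i + k - n) else 0 with hQ
  have hkey : R + (X ^ n - 1) * Q = X ^ k * charPoly n := by
    rw [hR, hQ, charPoly, Finset.mul_sum, Finset.mul_sum, ← Finset.sum_add_distrib]
    apply Finset.sum_congr rfl
    intro i hi
    have hin : i < n := mem_range.1 hi
    by_cases hc : n ≤ i + k
    · rw [if_pos hc]
      have hmod : (i + k) % n = i + k - n := by
        rw [Nat.mod_eq_sub_mod hc, Nat.mod_eq_of_lt (by omega)]
      have hexp : i + k - n + n = i + k := by omega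
      rw [hmod]
      calc Polynomial.C (χN i) * X ^ (i + k - n)
            + (X ^ n - 1) * (Polynomial.C (χN i) * X ^ (i + k - n))
          = Polynomial.C (χN i) * (X ^ (i + k - n) * X ^ n) := by ring
      _ = Polynomial.C (χN i) * X ^ (i + k) := by rw [← pow_add, hexp]
      _ = X ^ k * (Polynomial.C (χN i) * X ^ i) := by rw [pow_add]; ring
    · rw [if_neg hc]
      have hmod : (i + k) % n = i + k := Nat.mod_eq_of_lt (by omega)
      rw [hmod, mul_zero, add_zero, pow_add]
      ring
  have hdegR : R.degree < (X ^ n - 1 : Polynomial ℂ).degree := by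
    rw [hdeg, hR]
    apply lt_of_le_of_lt (Polynomial.degree_sum_le _ _)
    rw [Finset.sup_lt_iff (by exact_mod_cast WithBot.bot_lt_coe n)]
    intro i _
    apply lt_of_le_of_lt (Polynomial.degree_C_mul_X_pow_le _ _)
    exact_mod_cast Nat.mod_lt _ hn
  have hmm := (Polynomial.div_modByMonic_unique Q R hmon ⟨hkey, hdegR⟩).2
  rw [← Polynomial.modByMonic_eq_mod _ hmon]
  exact hmm

lemma trivial_bound {n k : ℕ} {z : ℂ} (hz : Complex.abs z = 1) :
    Complex.abs (∑ i ∈ range n, ((jacobiSym (i : ℤ) n : ℤ) : ℂ) * z ^ ((i + k) % n))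
      ≤ n := by
  calc Complex.abs (∑ i ∈ range n, ((jacobiSym (i : ℤ) n : ℤ) : ℂ) * z ^ ((i + k) % n))
      ≤ ∑ i ∈ range n, Complex.abs (((jacobiSym (i : ℤ) n : ℤ) : ℂ) * z ^ ((i + k) % n)) :=
        Complex.abs.sum_le _ _
  _ ≤ ∑ _i ∈ range n, (1 : ℝ) := by
      apply Finset.sum_le_sum
      intro i _
      rw [map_mul, map_pow, hz, one_pow, mul_one]
      rcases jacobiSym.trichotomy (i : ℤ) n with h | h | h <;> rw [h] <;> norm_num
  _ = n := by simp

lemma main_bound {n : ℕ} (hn : 2 < n) (hodd : Odd n) (hsqf : Squarefree n)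
    {k : ℕ} (hk : k < n) {z : ℂ} (hz : Complex.abs z = 1) :
    Complex.abs (∑ i ∈ range n, ((jacobiSym (i : ℤ) n : ℤ) : ℂ) * z ^ ((i + k) % n))
      ≤ Real.sqrt n * (3 + Real.log n) := by
  haveI : NeZero n := ⟨by omega⟩
  have hn0 : n ≠ 0 := by omega
  have hnpos : (0 : ℝ) < n := by exact_mod_cast (show 0 < n by omega)
  set ζ := zetaC n with hζdef
  have hζn : ζ ^ n = 1 := zeta_pow_n hn0
  have hg := gauss_ne_zero hn hodd hsqf
  have hcoeff : ∀ i : ℕ, ((jacobiSym (i : ℤ) n : ℤ) : ℂ)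
      = (gaussS n)⁻¹ * twistS n ((i : ℕ) : ZMod n) := by
    intro i
    rw [twist_eq hn hodd hsqf ((i : ℕ) : ZMod n), chiZ_natCast,
      mul_comm _ (gaussS n), ← mul_assoc, inv_mul_cancel₀ hg, one_mul]
  set D : ZMod n → ℂ := fun a => ∑ j ∈ range n, (ζ ^ a.val * z) ^ j with hD
  have hInner : ∀ a : ZMod n,
      ∑ i ∈ range n, ζ ^ (a * (i : ZMod n)).val * z ^ ((i + k) % n)
        = (ζ ^ a.val) ^ (n - k) * D a := by
    intro a
    have hηn : (ζ ^ a.val) ^ n = 1 := by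
      rw [← pow_mul, mul_comm, pow_mul, hζn, one_pow]
    have hstep1 : ∀ i ∈ range n, ζ ^ (a * (i : ZMod n)).val * z ^ ((i + k) % n)
        = (fun j => (ζ ^ a.val) ^ ((j + (n - k)) % n) * z ^ j) ((i + k) % n) := by
      intro i hi
      have hval : (a * (i : ZMod n)).val = a.val * i % n := by
        rw [ZMod.val_mul, ZMod.val_cast_of_lt (mem_range.1 hi)]
      simp only []
      rw [hval, pow_mod hζn, pow_mul, mod_inv_shift hk (mem_range.1 hi)]
    rw [Finset.sum_congr rfl hstep1,
      sum_shift (fun j => (ζ ^ a.val) ^ ((j + (n - k)) % n) * z ^ j) n k hk]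
    have hstep2 : ∀ j ∈ range n,
        (ζ ^ a.val) ^ ((j + (n - k)) % n) * z ^ j
          = (ζ ^ a.val) ^ (n - k) * (ζ ^ a.val * z) ^ j := by
      intro j _
      rw [pow_mod hηn, pow_add, mul_pow]
      ring
    rw [Finset.sum_congr rfl hstep2, ← Finset.mul_sum]
  have hE : ∑ i ∈ range n, ((jacobiSym (i : ℤ) n : ℤ) : ℂ) * z ^ ((i + k) % n)
      = (gaussS n)⁻¹ * ∑ a : ZMod n, chiZ n a * ((ζ ^ a.val) ^ (n - k) * D a) := by
    calc ∑ i ∈ range n, ((jacobiSym (i : ℤ) n : ℤ) : ℂ) * z ^ ((i + k) % n)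
        = ∑ i ∈ range n, (gaussS n)⁻¹ * (twistS n ((i : ℕ) : ZMod n) * z ^ ((i + k) % n)) := by
          apply Finset.sum_congr rfl
          intro i _
          rw [hcoeff i]
          ring
    _ = (gaussS n)⁻¹ * ∑ i ∈ range n, twistS n ((i : ℕ) : ZMod n) * z ^ ((i + k) % n) := by
          rw [Finset.mul_sum]
    _ = (gaussS n)⁻¹ * ∑ a : ZMod n, chiZ n a * ((ζ ^ a.val) ^ (n - k) * D a) := by
          congr 1
          calc ∑ i ∈ range n, twistS n ((i : ℕ) : ZMod n) * z ^ ((i + k) % n)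
              = ∑ i ∈ range n, ∑ a : ZMod n,
                  chiZ n a * ζ ^ (a * (i : ZMod n)).val * z ^ ((i + k) % n) := by
                apply Finset.sum_congr rfl
                intro i _
                rw [twistS, Finset.sum_mul]
          _ = ∑ a : ZMod n, ∑ i ∈ range n,
                  chiZ n a * ζ ^ (a * (i : ZMod n)).val * z ^ ((i + k) % n) :=
                Finset.sum_comm
          _ = ∑ a : ZMod n, chiZ n a * ((ζ ^ a.val) ^ (n - k) * D a) := by
                apply Finset.sum_congr rfl
                intro a _
                rw [← hInner a, Finset.mul_sum]
                apply Finset.sum_congr rfl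
                intro i _
                ring
  have habs1 : Complex.abs (∑ i ∈ range n,
        ((jacobiSym (i : ℤ) n : ℤ) : ℂ) * z ^ ((i + k) % n))
      ≤ (Real.sqrt n)⁻¹ * ∑ a : ZMod n, Complex.abs (D a) := by
    rw [hE, map_mul, map_inv₀, abs_gauss hn hodd hsqf]
    apply mul_le_mul_of_nonneg_left ?_ (by positivity)
    calc Complex.abs (∑ a : ZMod n, chiZ n a * ((ζ ^ a.val) ^ (n - k) * D a))
        ≤ ∑ a : ZMod n, Complex.abs (chiZ n a * ((ζ ^ a.val) ^ (n - k) * D a)) :=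
          Complex.abs.sum_le _ _
    _ ≤ ∑ a : ZMod n, Complex.abs (D a) := by
        apply Finset.sum_le_sum
        intro a _
        rw [map_mul, map_mul, map_pow, map_pow, abs_zeta, one_pow, one_pow, one_mul]
        calc Complex.abs (chiZ n a) * Complex.abs (D a)
            ≤ 1 * Complex.abs (D a) :=
              mul_le_mul_of_nonneg_right (abs_chiZ n a) (AbsoluteValue.nonneg _ _)
        _ = Complex.abs (D a) := one_mul _
  have hzmod : ∑ a : ZMod n, Complex.abs (D a)
      = ∑ a ∈ range n, Complex.abs (∑ j ∈ range n, (ζ ^ a * z) ^ j) := by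
    rw [← sum_range_zmod n (fun x => Complex.abs (D x))]
    apply Finset.sum_congr rfl
    intro a _
    congr 1
    apply Finset.sum_congr rfl
    intro j _
    rw [ZMod.val_natCast, pow_mod hζn]
  -- analytic part
  have hθr : 2 * Real.pi * (z.arg / (2 * Real.pi)) = z.arg := by
    have := Real.pi_ne_zero
    field_simp
  have hθ : z = ee (z.arg / (2 * Real.pi)) := by
    rw [ee, hθr]
    conv_lhs => rw [← Complex.abs_mul_exp_arg_mul_I z]
    rw [hz, Complex.ofReal_one, one_mul]
  set c := z.arg / (2 * Real.pi) with hc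
  set k0 := ⌊(n : ℝ) * c⌋ with hk0
  set u := (n : ℝ) * c - k0 with hu
  have hu0 : 0 ≤ u := by rw [hu]; linarith [Int.floor_le ((n : ℝ) * c)]
  have hu1 : u < 1 := by rw [hu]; linarith [Int.lt_floor_add_one ((n : ℝ) * c)]
  have hk0nn : 0 ≤ k0 % (n : ℤ) := Int.emod_nonneg k0 (by exact_mod_cast hn0)
  set k1 := (k0 % (n : ℤ)).toNat with hk1def
  have hk1lt : k1 < n := by
    rw [hk1def, Int.toNat_lt hk0nn]
    exact Int.emod_lt_of_pos k0 (by exact_mod_cast (show 0 < n by omega))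
  have hk1cast : (k1 : ℝ) = ((k0 % (n : ℤ) : ℤ) : ℝ) := by
    rw [hk1def]
    exact_mod_cast congrArg (Int.cast : ℤ → ℝ) (Int.toNat_of_nonneg hk0nn)
  have hwa : ∀ a : ℕ, ζ ^ a * z = ee ((((a + k1 : ℕ) : ℝ) + u) / n) := by
    intro a
    rw [hζdef, zeta_pow n a]
    conv_lhs => rw [hθ]
    rw [← ee_add]
    apply ee_eq_of_sub_int (k0 / (n : ℤ))
    have hdm : (n : ℤ) * (k0 / (n : ℤ)) + k0 % (n : ℤ) = k0 := Int.mul_ediv_add_emod k0 (n : ℤ)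
    have hdmr : (n : ℝ) * ((k0 / (n : ℤ) : ℤ) : ℝ) + ((k0 % (n : ℤ) : ℤ) : ℝ) = ((k0 : ℤ) : ℝ) := by
      exact_mod_cast congrArg (Int.cast : ℤ → ℝ) hdm
    have hnr : (n : ℝ) ≠ 0 := by positivity
    field_simp
    push_cast
    rw [hk1cast, hu]
    nlinarith [hdmr]
  have hsum2 : ∑ a ∈ range n, Complex.abs (∑ j ∈ range n, (ζ ^ a * z) ^ j)
      = ∑ b ∈ range n, Complex.abs (∑ j ∈ range n, (ee (((b : ℝ) + u) / n)) ^ j) := by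
    set FD : ℕ → ℝ := fun m => Complex.abs (∑ j ∈ range n, (ee (((m : ℝ) + u) / n)) ^ j)
      with hFD
    have h1 : ∀ a ∈ range n,
        Complex.abs (∑ j ∈ range n, (ζ ^ a * z) ^ j) = FD ((a + k1) % n) := by
      intro a _
      rw [hFD]
      simp only []
      have hee : ee ((((a + k1 : ℕ) : ℝ) + u) / n)
          = ee (((((a + k1) % n : ℕ) : ℝ) + u) / n) := by
        apply ee_eq_of_sub_int (((a + k1) / n : ℕ) : ℤ)
        have hmd : ((a + k1) % n + n * ((a + k1) / n) : ℕ) = a + k1 := Nat.mod_add_div _ _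
        have hmdr := congrArg (Nat.cast : ℕ → ℝ) hmd
        push_cast at hmdr
        rw [div_sub_div_same]
        rw [show ((a + k1 : ℕ) : ℝ) + u - ((((a + k1) % n : ℕ) : ℝ) + u)
            = (n : ℝ) * (((a + k1) / n : ℕ) : ℝ) from by push_cast; linarith]
        rw [mul_div_cancel_left₀ _ (show (n:ℝ) ≠ 0 by positivity)]
        norm_cast
      rw [hwa a, hee]
    rw [Finset.sum_congr rfl h1, sum_shift FD n k1 hk1lt]
  have hks := key_sum (show 3 ≤ n by omega) hu0 hu1
  calc Complex.abs (∑ i ∈ range n, ((jacobiSym (i : ℤ) n : ℤ) : ℂ) * z ^ ((i + k) % n))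
      ≤ (Real.sqrt n)⁻¹ * ∑ a : ZMod n, Complex.abs (D a) := habs1
  _ = (Real.sqrt n)⁻¹
        * ∑ b ∈ range n, Complex.abs (∑ j ∈ range n, (ee (((b : ℝ) + u) / n)) ^ j) := by
      rw [hzmod, hsum2]
  _ ≤ (Real.sqrt n)⁻¹ * ((n : ℝ) * (3 + Real.log n)) := by
      apply mul_le_mul_of_nonneg_left hks (by positivity)
  _ = Real.sqrt n * (3 + Real.log n) := by
      have hs : Real.sqrt n ≠ 0 := by
        have := Real.sqrt_pos.2 hnpos
        linarith
      calc (Real.sqrt n)⁻¹ * ((n : ℝ) * (3 + Real.log n))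
          = (Real.sqrt n)⁻¹ * ((Real.sqrt n * Real.sqrt n) * (3 + Real.log n)) := by
            rw [Real.mul_self_sqrt hnpos.le]
      _ = ((Real.sqrt n)⁻¹ * Real.sqrt n) * (Real.sqrt n * (3 + Real.log n)) := by ring
      _ = Real.sqrt n * (3 + Real.log n) := by rw [inv_mul_cancel₀ hs, one_mul]

end S14

open S14 in
/-- For odd square-free `n > 2` and real `r`, `max_{|z|=1} |J_r(z)| ≤ 2 n^{1/2} log n`. -/
theorem stmt_14 (n : ℕ) (hn : 2 < n) (hodd : Odd n) (hsqf : Squarefree n) (r : ℝ) :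
    ∀ z : ℂ, ‖z‖ = 1 →
      ‖(rot n r (charPoly n)).eval z‖ ≤ 2 * Real.sqrt n * Real.log n := by

  intro z hz
  have hnpos : (0:ℝ) < n := by exact_mod_cast (show 0 < n by omega)
  set k : ℕ := ((-⌊(n : ℝ) * r⌋) % (n : ℤ)).toNat with hkdef
  have hk : k < n := by
    rw [hkdef, Int.toNat_lt (Int.emod_nonneg _ (by exact_mod_cast (show n ≠ 0 by omega)))]
    exact Int.emod_lt_of_pos _ (by exact_mod_cast (show 0 < n by omega))
  have hrot : rot n r (charPoly n)
      = (Polynomial.X ^ k * charPoly n) % (Polynomial.X ^ n - 1) := by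
    rw [hkdef]
    rfl
  rw [hrot, S14.rot_eq n (by omega) k hk]
  have heval : Polynomial.eval z (∑ i ∈ Finset.range n,
        Polynomial.C ((jacobiSym (i : ℤ) n : ℤ) : ℂ) * Polynomial.X ^ ((i + k) % n))
      = ∑ i ∈ Finset.range n, ((jacobiSym (i : ℤ) n : ℤ) : ℂ) * z ^ ((i + k) % n) := by
    rw [Polynomial.eval_finset_sum]
    apply Finset.sum_congr rfl
    intro i _
    rw [Polynomial.eval_mul, Polynomial.eval_C, Polynomial.eval_pow, Polynomial.eval_X]
  rw [heval]
  have hsq : (0:ℝ) ≤ Real.sqrt n := Real.sqrt_nonneg _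
  by_cases hn21 : 21 ≤ n
  · have h1 := S14.main_bound hn hodd hsqf hk hz
    have hlog : (3:ℝ) ≤ Real.log n :=
      le_trans log21 (Real.log_le_log (by norm_num) (by exact_mod_cast hn21))
    calc Complex.abs (∑ i ∈ Finset.range n,
          ((jacobiSym (i : ℤ) n : ℤ) : ℂ) * z ^ ((i + k) % n))
        ≤ Real.sqrt n * (3 + Real.log n) := h1
    _ ≤ Real.sqrt n * (Real.log n + Real.log n) := by
        apply mul_le_mul_of_nonneg_left (by linarith) hsq
    _ = 2 * Real.sqrt n * Real.log n := by ring
  · have h1 := S14.trivial_bound (n := n) (k := k) hz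
    have sqrt_le : ∀ x : ℝ, 0 ≤ x → (n:ℝ) ≤ x^2 → Real.sqrt n ≤ x := by
      intro x hx h
      calc Real.sqrt n ≤ Real.sqrt (x^2) := Real.sqrt_le_sqrt h
      _ = x := Real.sqrt_sq hx
    have hsqle : Real.sqrt n ≤ 2 * Real.log n := by
      have hc : (n:ℝ) ≤ 20 := by exact_mod_cast (show n ≤ 20 by omega)
      rcases (show n ≤ 4 ∨ (5 ≤ n ∧ n ≤ 9) ∨ 10 ≤ n by omega) with h | h | h
      · have hs : Real.sqrt n ≤ 2 := by
          apply sqrt_le 2 (by norm_num)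
          have : (n:ℝ) ≤ 4 := by exact_mod_cast h
          linarith
        have hl : (1:ℝ) ≤ Real.log n :=
          le_trans log3 (Real.log_le_log (by norm_num) (by exact_mod_cast hn))
        linarith
      · have hs : Real.sqrt n ≤ 3 := by
          apply sqrt_le 3 (by norm_num)
          have : (n:ℝ) ≤ 9 := by exact_mod_cast h.2
          linarith
        have hl : (3/2:ℝ) ≤ Real.log n :=
          le_trans log5 (Real.log_le_log (by norm_num)
            (by exact_mod_cast (show 5 ≤ n from h.1)))
        linarith
      · have hs : Real.sqrt n ≤ 4.5 := by
          apply sqrt_le 4.5 (by norm_num)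
          norm_num
          linarith
        have hl : (9/4:ℝ) ≤ Real.log n :=
          le_trans log10 (Real.log_le_log (by norm_num)
            (by exact_mod_cast (show 10 ≤ n from h)))
        linarith
    calc Complex.abs (∑ i ∈ Finset.range n,
          ((jacobiSym (i : ℤ) n : ℤ) : ℂ) * z ^ ((i + k) % n))
        ≤ (n:ℝ) := h1
    _ = Real.sqrt n * Real.sqrt n := (Real.mul_self_sqrt hnpos.le).symm
    _ ≤ Real.sqrt n * (2 * Real.log n) := mul_le_mul_of_nonneg_left hsqle hsq
    _ = 2 * Real.sqrt n * Real.log n := by ring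
end
end

section
/- Let n range over an infinite increasing sequence of odd square-free integers greater than 1, let r be a real number, and let V be drawn uniformly at random from 𝒱_n. Then Pr(‖V_r‖_4^4 < 288 ψ(n)^2 log n) → 1 as n → ∞; that is, the proportion of V ∈ 𝒱_n satisfying ‖V_r‖_4^4 < 288 ψ(n)^2 log n tends to 1. -/
noncomputable section

open Polynomial Filter

open Finset


def sgnc (t : Finset ℕ) (j : ℕ) : ℂ := if j ∈ t then 1 else -1

lemma pt2 (y c : ℂ) : ‖y - c‖^2 + ‖y + c‖^2
    = 2 * ‖y‖ ^2 + 2 * ‖c‖ ^2 := by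
  have h : ∀ z : ℂ, (‖z‖)^2 = z.re^2 + z.im^2 := by
    intro z; rw [Complex.sq_norm, Complex.normSq_apply]; ring
  simp only [h, Complex.sub_re, Complex.sub_im, Complex.add_re, Complex.add_im]
  ring

lemma pt4 (y c : ℂ) : ‖y - c‖^4 + ‖y + c‖^4
    ≤ 2 * (‖y‖ ^2 + ‖c‖ ^2)^2 + 8 * ‖c‖ ^2 * ‖y‖ ^2 := by
  have h : ∀ z : ℂ, (‖z‖)^2 = z.re^2 + z.im^2 := by
    intro z; rw [Complex.sq_norm, Complex.normSq_apply]; ring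
  have h4 : ∀ z : ℂ, (‖z‖)^4 = (z.re^2 + z.im^2)^2 := by
    intro z; rw [show (4:ℕ) = 2*2 by norm_num, pow_mul, h]
  simp only [h, h4, Complex.sub_re, Complex.sub_im, Complex.add_re, Complex.add_im]
  nlinarith [sq_nonneg (y.re * c.im - y.im * c.re)]

lemma khintchine (a : ℕ → ℂ) (s : Finset ℕ) :
    (∑ t ∈ s.powerset, ‖∑ j ∈ s, sgnc t j * a j‖ ^ 2)
      = 2 ^ s.card * ∑ j ∈ s, ‖a j‖ ^ 2 ∧
    (∑ t ∈ s.powerset, ‖∑ j ∈ s, sgnc t j * a j‖ ^ 4)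
      ≤ 2 ^ s.card * 3 * (∑ j ∈ s, ‖a j‖ ^ 2) ^ 2 := by
  induction s using Finset.induction_on with
  | empty => simp
  | @insert i s hi ih =>
    obtain ⟨ih2, ih4⟩ := ih
    set Q := ∑ j ∈ s, ‖a j‖ ^ 2 with hQ
    have hQ0 : 0 ≤ Q := Finset.sum_nonneg fun j _ => by positivity
    have key : ∀ t ∈ s.powerset,
        (∑ j ∈ insert i s, sgnc t j * a j) = (∑ j ∈ s, sgnc t j * a j) - a i ∧
        (∑ j ∈ insert i s, sgnc (insert i t) j * a j)
          = (∑ j ∈ s, sgnc t j * a j) + a i := by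
      intro t ht
      rw [Finset.mem_powerset] at ht
      have hit : i ∉ t := fun h => hi (ht h)
      have h2 : ∀ j ∈ s, sgnc (insert i t) j * a j = sgnc t j * a j := by
        intro j hj
        have hji : j ≠ i := fun h => hi (h ▸ hj)
        simp [sgnc, Finset.mem_insert, hji]
      constructor
      · rw [Finset.sum_insert hi, show sgnc t i = -1 by simp [sgnc, hit]]
        ring
      · rw [Finset.sum_insert hi, show sgnc (insert i t) i = 1 by simp [sgnc],
          Finset.sum_congr rfl h2]
        ring
    have hsum2 : (∑ t ∈ (insert i s).powerset,
          ‖∑ j ∈ insert i s, sgnc t j * a j‖ ^ 2)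
        = ∑ t ∈ s.powerset, (‖(∑ j ∈ s, sgnc t j * a j) - a i‖ ^ 2
            + ‖(∑ j ∈ s, sgnc t j * a j) + a i‖ ^ 2) := by
      rw [Finset.sum_powerset_insert hi, ← Finset.sum_add_distrib]
      refine Finset.sum_congr rfl fun t ht => ?_
      rw [(key t ht).1, (key t ht).2]
    have hsum4 : (∑ t ∈ (insert i s).powerset,
          ‖∑ j ∈ insert i s, sgnc t j * a j‖ ^ 4)
        = ∑ t ∈ s.powerset, (‖(∑ j ∈ s, sgnc t j * a j) - a i‖ ^ 4
            + ‖(∑ j ∈ s, sgnc t j * a j) + a i‖ ^ 4) := by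
      rw [Finset.sum_powerset_insert hi, ← Finset.sum_add_distrib]
      refine Finset.sum_congr rfl fun t ht => ?_
      rw [(key t ht).1, (key t ht).2]
    have hcard : (insert i s).card = s.card + 1 := Finset.card_insert_of_notMem hi
    have hQ' : (∑ j ∈ insert i s, ‖a j‖ ^ 2) = ‖a i‖ ^ 2 + Q :=
      Finset.sum_insert hi
    set C := ‖a i‖ ^ 2 with hC
    have hC0 : (0:ℝ) ≤ C := by positivity
    have split : ∀ (f : Finset ℕ → ℝ) (b1 b2 b3 : ℝ),
        ∑ t ∈ s.powerset, (b1 * f t ^ 2 + b2 * f t + b3)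
          = b1 * ∑ t ∈ s.powerset, f t ^ 2 + b2 * ∑ t ∈ s.powerset, f t
            + (s.powerset.card : ℝ) * b3 := by
      intro f b1 b2 b3
      rw [Finset.sum_add_distrib, Finset.sum_add_distrib, ← Finset.mul_sum, ← Finset.mul_sum,
        Finset.sum_const, nsmul_eq_mul]
    have h2m : (0:ℝ) < 2 ^ s.card := by positivity
    constructor
    · rw [hsum2, hcard, hQ']
      calc ∑ t ∈ s.powerset, (‖(∑ j ∈ s, sgnc t j * a j) - a i‖ ^ 2
            + ‖(∑ j ∈ s, sgnc t j * a j) + a i‖ ^ 2)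
          = ∑ t ∈ s.powerset, (0 * (‖∑ j ∈ s, sgnc t j * a j‖ ^ 2) ^ 2
              + 2 * ‖∑ j ∈ s, sgnc t j * a j‖ ^ 2 + 2 * C) := by
            refine Finset.sum_congr rfl fun t _ => ?_
            rw [pt2]; ring
        _ = 2 ^ (s.card + 1) * (C + Q) := by
            rw [split (fun t => ‖∑ j ∈ s, sgnc t j * a j‖ ^ 2) 0 2 (2*C)]
            have hs2 : ∑ t ∈ s.powerset, ‖∑ j ∈ s, sgnc t j * a j‖ ^ 2
              = 2 ^ s.card * Q := ih2
            rw [hs2, Finset.card_powerset]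
            push_cast
            ring
    · rw [hsum4, hcard, hQ']
      calc ∑ t ∈ s.powerset, (‖(∑ j ∈ s, sgnc t j * a j) - a i‖ ^ 4
            + ‖(∑ j ∈ s, sgnc t j * a j) + a i‖ ^ 4)
          ≤ ∑ t ∈ s.powerset, (2 * (‖∑ j ∈ s, sgnc t j * a j‖ ^ 2 + C) ^ 2
              + 8 * C * ‖∑ j ∈ s, sgnc t j * a j‖ ^ 2) :=
            Finset.sum_le_sum fun t _ => pt4 _ _
        _ = ∑ t ∈ s.powerset, (2 * (‖∑ j ∈ s, sgnc t j * a j‖ ^ 2) ^ 2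
              + (12 * C) * ‖∑ j ∈ s, sgnc t j * a j‖ ^ 2 + 2 * C ^ 2) := by
            refine Finset.sum_congr rfl fun t _ => ?_
            ring
        _ = 2 * ∑ t ∈ s.powerset, (‖∑ j ∈ s, sgnc t j * a j‖ ^ 2) ^ 2
            + (12 * C) * ∑ t ∈ s.powerset, ‖∑ j ∈ s, sgnc t j * a j‖ ^ 2
            + (s.powerset.card : ℝ) * (2 * C ^ 2) :=
            split (fun t => ‖∑ j ∈ s, sgnc t j * a j‖ ^ 2) 2 (12*C) (2*C^2)
        _ ≤ 2 ^ (s.card + 1) * 3 * (C + Q) ^ 2 := by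
            have e4 : ∑ t ∈ s.powerset, (‖∑ j ∈ s, sgnc t j * a j‖ ^ 2) ^ 2
                = ∑ t ∈ s.powerset, ‖∑ j ∈ s, sgnc t j * a j‖ ^ 4 := by
              refine Finset.sum_congr rfl fun t _ => ?_; ring
            rw [e4, ih2, Finset.card_powerset]
            push_cast
            nlinarith [ih4, pow_succ (2:ℝ) s.card,
              mul_nonneg (mul_nonneg h2m.le hC0) hC0,
              mul_nonneg (mul_nonneg h2m.le hC0) hQ0]




def sset (n : ℕ) : Finset ℕ := (Finset.range n).filter (fun j => Nat.gcd j n ≠ 1)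

def polyOf (n : ℕ) (t : Finset ℕ) : Polynomial ℂ :=
  ∑ j ∈ sset n, Polynomial.C (sgnc t j) * Polynomial.X ^ j

lemma coeff_polyOf (n : ℕ) (t : Finset ℕ) (k : ℕ) :
    (polyOf n t).coeff k = if k ∈ sset n then sgnc t k else 0 := by
  rw [polyOf, Polynomial.finset_sum_coeff]
  simp only [Polynomial.coeff_C_mul, Polynomial.coeff_X_pow]
  rw [Finset.sum_congr rfl (fun j _ => by
    rw [show sgnc t j * (if k = j then (1:ℂ) else 0) = if j = k then sgnc t j else 0 by
      by_cases h : k = j <;> simp [h, eq_comm]])]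
  exact Finset.sum_ite_eq' (sset n) k (sgnc t)

-- X^k mod X^n - 1
lemma xpow_mod (n k : ℕ) (hn : 0 < n) :
    (Polynomial.X ^ k : Polynomial ℂ) %ₘ (Polynomial.X ^ n - 1) = Polynomial.X ^ (k % n) := by
  have hmonic : (Polynomial.X ^ n - 1 : Polynomial ℂ).Monic := by
    have := Polynomial.monic_X_pow_sub_C (1:ℂ) hn.ne'
    simpa using this
  have hdvd : (Polynomial.X ^ n - 1 : Polynomial ℂ) ∣ Polynomial.X ^ k - Polynomial.X ^ (k % n) := by
    have h1 : (Polynomial.X ^ k : Polynomial ℂ)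
        = Polynomial.X ^ (k % n) * ((Polynomial.X ^ n) ^ (k / n)) := by
      rw [← pow_mul, ← pow_add]
      congr 1
      exact (Nat.mod_add_div k n).symm
    have h2 : (Polynomial.X ^ n - 1 : Polynomial ℂ) ∣ (Polynomial.X ^ n) ^ (k / n) - 1 := by
      have := sub_dvd_pow_sub_pow (Polynomial.X ^ n : Polynomial ℂ) 1 (k / n)
      simpa using this
    obtain ⟨q, hq⟩ := h2
    exact ⟨Polynomial.X ^ (k % n) * q, by rw [h1]; linear_combination Polynomial.X ^ (k % n) * hq⟩
  have hz : (Polynomial.X ^ k - Polynomial.X ^ (k % n) : Polynomial ℂ) %ₘ (Polynomial.X ^ n - 1) = 0 :=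
    (Polynomial.modByMonic_eq_zero_iff_dvd hmonic).mpr hdvd
  have hself : (Polynomial.X ^ (k % n) : Polynomial ℂ) %ₘ (Polynomial.X ^ n - 1)
      = Polynomial.X ^ (k % n) := by
    rw [Polynomial.modByMonic_eq_self_iff hmonic]
    have hdeg : (Polynomial.X ^ n - 1 : Polynomial ℂ).degree = n := by
      have := Polynomial.degree_X_pow_sub_C hn (1:ℂ)
      simpa using this
    rw [hdeg, Polynomial.degree_X_pow]
    exact_mod_cast Nat.mod_lt k hn
  calc (Polynomial.X ^ k : Polynomial ℂ) %ₘ (Polynomial.X ^ n - 1)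
      = ((Polynomial.X ^ k - Polynomial.X ^ (k % n)) + Polynomial.X ^ (k % n)) %ₘ (Polynomial.X ^ n - 1) := by
        ring_nf
    _ = Polynomial.X ^ (k % n) := by
        rw [Polynomial.add_modByMonic, hz, hself, zero_add]

lemma rot_polyOf (n : ℕ) (r : ℝ) (t : Finset ℕ) (hn : 0 < n) :
    rot n r (polyOf n t) = ∑ j ∈ sset n,
      Polynomial.C (sgnc t j) * Polynomial.X ^ ((((-⌊(n : ℝ) * r⌋) % (n : ℤ)).toNat + j) % n) := by
  set m := ((-⌊(n : ℝ) * r⌋) % (n : ℤ)).toNat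
  have hmonic : (Polynomial.X ^ n - 1 : Polynomial ℂ).Monic := by
    have := Polynomial.monic_X_pow_sub_C (1:ℂ) hn.ne'
    simpa using this
  have hmod : ∀ p : Polynomial ℂ, p % (Polynomial.X ^ n - 1) = p %ₘ (Polynomial.X ^ n - 1) := by
    intro p
    rw [Polynomial.mod_def, hmonic.leadingCoeff]
    simp
  rw [rot, hmod]
  have hexp : Polynomial.X ^ m * polyOf n t
      = ∑ j ∈ sset n, Polynomial.C (sgnc t j) * Polynomial.X ^ (m + j) := by
    rw [polyOf, Finset.mul_sum]
    refine Finset.sum_congr rfl fun j _ => ?_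
    ring
  rw [hexp]
  rw [show (∑ j ∈ sset n, Polynomial.C (sgnc t j) * Polynomial.X ^ (m + j)) %ₘ (Polynomial.X ^ n - 1)
      = Polynomial.modByMonicHom (Polynomial.X ^ n - 1)
          (∑ j ∈ sset n, Polynomial.C (sgnc t j) * Polynomial.X ^ (m + j)) from rfl,
    map_sum]
  refine Finset.sum_congr rfl fun j _ => ?_
  show (Polynomial.C (sgnc t j) * Polynomial.X ^ (m + j)) %ₘ (Polynomial.X ^ n - 1) = _
  rw [← smul_eq_C_mul, ← smul_eq_C_mul, Polynomial.smul_modByMonic, xpow_mod n (m+j) hn]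



lemma cont_abs_eval (A : Polynomial ℂ) :
    Continuous fun θ : ℝ => ‖A.eval (Complex.exp (Complex.I * θ))‖ :=
  continuous_norm.comp ((A.continuous).comp
    (Complex.continuous_exp.comp (continuous_const.mul Complex.continuous_ofReal)))

lemma lnorm4_pow (A : Polynomial ℂ) :
    (lnorm 4 A) ^ 4 = (2 * Real.pi)⁻¹ * ∫ θ in (0:ℝ)..(2 * Real.pi),
      (‖A.eval (Complex.exp (Complex.I * θ))‖) ^ (4:ℕ) := by
  have key : (∫ θ in (0:ℝ)..(2 * Real.pi),
        ‖A.eval (Complex.exp (Complex.I * θ))‖ ^ (4:ℝ))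
      = ∫ θ in (0:ℝ)..(2 * Real.pi),
        (‖A.eval (Complex.exp (Complex.I * θ))‖) ^ (4:ℕ) := by
    refine intervalIntegral.integral_congr fun θ _ => ?_
    rw [show ((4:ℝ)) = ((4:ℕ):ℝ) by norm_num, Real.rpow_natCast]
  have hI0 : 0 ≤ ∫ θ in (0:ℝ)..(2 * Real.pi),
      (‖A.eval (Complex.exp (Complex.I * θ))‖) ^ (4:ℕ) :=
    intervalIntegral.integral_nonneg (by positivity) fun u _ => by positivity
  have hx : 0 ≤ (2 * Real.pi)⁻¹ * ∫ θ in (0:ℝ)..(2 * Real.pi),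
      (‖A.eval (Complex.exp (Complex.I * θ))‖) ^ (4:ℕ) :=
    mul_nonneg (by positivity) hI0
  rw [lnorm, key, ← Real.rpow_natCast (_ ^ ((4:ℝ))⁻¹) 4, ← Real.rpow_mul hx]
  norm_num


lemma sum_bound (n : ℕ) (r : ℝ) (hn : 0 < n) :
    ∑ t ∈ (sset n).powerset, (lnorm 4 (rot n r (polyOf n t))) ^ 4
      ≤ 2 ^ (sset n).card * 3 * ((sset n).card : ℝ) ^ 2 := by
  set m := ((-⌊(n : ℝ) * r⌋) % (n : ℤ)).toNat with hm
  set e : ℕ → ℕ := fun j => (m + j) % n with he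
  have heval : ∀ (t : Finset ℕ) (z : ℂ), (rot n r (polyOf n t)).eval z
      = ∑ j ∈ sset n, sgnc t j * z ^ (e j) := by
    intro t z
    rw [rot_polyOf n r t hn, Polynomial.eval_finset_sum]
    simp
    rfl
  have hpt : ∀ θ : ℝ, ∑ t ∈ (sset n).powerset,
      (‖(rot n r (polyOf n t)).eval (Complex.exp (Complex.I * θ))‖) ^ (4:ℕ)
      ≤ 2 ^ (sset n).card * 3 * ((sset n).card : ℝ) ^ 2 := by
    intro θ
    have h1 : ∀ j ∈ sset n,
        ‖(Complex.exp (Complex.I * θ)) ^ (e j)‖ ^ 2 = 1 := by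
      intro j _
      rw [norm_pow, Complex.norm_exp]
      simp
    have := (khintchine (fun j => (Complex.exp (Complex.I * θ)) ^ (e j)) (sset n)).2
    rw [Finset.sum_congr rfl h1, Finset.sum_const, nsmul_eq_mul, mul_one] at this
    calc ∑ t ∈ (sset n).powerset,
        (‖(rot n r (polyOf n t)).eval (Complex.exp (Complex.I * θ))‖) ^ (4:ℕ)
        = ∑ t ∈ (sset n).powerset, ‖∑ j ∈ sset n, sgnc t j * (Complex.exp (Complex.I * θ)) ^ (e j)‖ ^ (4:ℕ) := by
          refine Finset.sum_congr rfl fun t _ => ?_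
          rw [heval]
      _ ≤ 2 ^ (sset n).card * 3 * ((sset n).card : ℝ) ^ 2 := this
  have hcont : ∀ t : Finset ℕ, Continuous fun θ : ℝ =>
      (‖(rot n r (polyOf n t)).eval (Complex.exp (Complex.I * θ))‖) ^ (4:ℕ) :=
    fun t => (cont_abs_eval _).pow 4
  have hint : ∀ t ∈ (sset n).powerset, IntervalIntegrable (fun θ : ℝ =>
      (‖(rot n r (polyOf n t)).eval (Complex.exp (Complex.I * θ))‖) ^ (4:ℕ))
      MeasureTheory.volume 0 (2 * Real.pi) :=
    fun t _ => (hcont t).intervalIntegrable _ _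
  calc ∑ t ∈ (sset n).powerset, (lnorm 4 (rot n r (polyOf n t))) ^ 4
      = (2 * Real.pi)⁻¹ * ∑ t ∈ (sset n).powerset, ∫ θ in (0:ℝ)..(2 * Real.pi),
          (‖(rot n r (polyOf n t)).eval (Complex.exp (Complex.I * θ))‖) ^ (4:ℕ) := by
        rw [Finset.mul_sum]
        exact Finset.sum_congr rfl fun t _ => lnorm4_pow _
    _ = (2 * Real.pi)⁻¹ * ∫ θ in (0:ℝ)..(2 * Real.pi), ∑ t ∈ (sset n).powerset,
          (‖(rot n r (polyOf n t)).eval (Complex.exp (Complex.I * θ))‖) ^ (4:ℕ) := by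
        rw [intervalIntegral.integral_finset_sum hint]
    _ ≤ (2 * Real.pi)⁻¹ * ∫ θ in (0:ℝ)..(2 * Real.pi),
          (2 ^ (sset n).card * 3 * ((sset n).card : ℝ) ^ 2 : ℝ) := by
        refine mul_le_mul_of_nonneg_left ?_ (by positivity)
        refine intervalIntegral.integral_mono_on (by positivity)
          (MeasureTheory.IntegrableOn.intervalIntegrable ?_) (intervalIntegrable_const)
          (fun θ _ => hpt θ)
        · exact ((continuous_finset_sum _ fun t _ => hcont t)).integrableOn_uIcc
    _ = 2 ^ (sset n).card * 3 * ((sset n).card : ℝ) ^ 2 := by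
        rw [intervalIntegral.integral_const, sub_zero, smul_eq_mul, ← mul_assoc,
          inv_mul_cancel₀ (by positivity : (2 * Real.pi) ≠ 0), one_mul]




lemma mem_sset (n k : ℕ) : k ∈ sset n ↔ k < n ∧ Nat.gcd k n ≠ 1 := by
  simp [sset]

lemma polyOf_injOn (n : ℕ) : ∀ t1 ∈ (sset n).powerset, ∀ t2 ∈ (sset n).powerset,
    polyOf n t1 = polyOf n t2 → t1 = t2 := by
  intro t1 h1 t2 h2 h
  rw [Finset.mem_powerset] at h1 h2
  ext a
  by_cases ha : a ∈ sset n
  · have := congrArg (fun p => Polynomial.coeff p a) h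
    simp only [coeff_polyOf, ha, if_pos] at this
    by_cases ha1 : a ∈ t1 <;> by_cases ha2 : a ∈ t2 <;>
      simp only [sgnc, ha1, ha2, if_pos, if_neg, if_true, if_false] at this ⊢ <;>
      first
      | tauto
      | (exfalso; norm_num at this)
  · constructor
    · intro h'; exact absurd (h1 h') ha
    · intro h'; exact absurd (h2 h') ha

lemma vset_eq (n : ℕ) (hn : 0 < n) :
    VSet n = ↑(((sset n).powerset).image (polyOf n)) := by
  classical
  ext V
  simp only [Finset.coe_image, Set.mem_image, Finset.mem_coe, Finset.mem_powerset]
  constructor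
  · rintro ⟨hhigh, hlow⟩
    refine ⟨(sset n).filter (fun j => V.coeff j = 1), Finset.filter_subset _ _, ?_⟩
    ext k
    rw [coeff_polyOf]
    by_cases hk : k ∈ sset n
    · rw [if_pos hk]
      obtain ⟨hkn, hkg⟩ := (mem_sset n k).mp hk
      obtain ⟨hv, hiff⟩ := hlow k hkn
      have hne : V.coeff k ≠ 0 := fun h => hkg (hiff.mp h)
      rcases hv with h0 | h1 | h2
      · exact absurd h0 hne
      · simp [sgnc, Finset.mem_filter, hk, h1]
      · have : V.coeff k ≠ 1 := by rw [h2]; norm_num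
        simp only [sgnc, Finset.mem_filter, hk, true_and, if_neg this, h2]
        norm_num
    · rw [if_neg hk]
      rcases lt_or_ge k n with hkn | hkn
      · have hg : Nat.gcd k n = 1 := by
          by_contra hg
          exact hk ((mem_sset n k).mpr ⟨hkn, hg⟩)
        exact ((hlow k hkn).2.mpr hg).symm
      · exact (hhigh k hkn).symm
  · rintro ⟨t, ht, rfl⟩
    constructor
    · intro j hj
      rw [coeff_polyOf, if_neg]
      rw [mem_sset]
      omega
    · intro j hj
      rw [coeff_polyOf]
      by_cases hjs : j ∈ sset n
      · have hg := ((mem_sset n j).mp hjs).2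
        rw [if_pos hjs]
        constructor
        · by_cases hjt : j ∈ t <;> simp [sgnc, hjt]
        · constructor
          · intro h0
            exfalso
            by_cases hjt : j ∈ t <;> simp [sgnc, hjt] at h0
          · intro h; exact absurd h hg
      · have hg : Nat.gcd j n = 1 := by
          by_contra hg
          exact hjs ((mem_sset n j).mpr ⟨hj, hg⟩)
        rw [if_neg hjs]
        simp [hg]

lemma vset_ncard (n : ℕ) (hn : 0 < n) :
    Set.ncard (VSet n) = 2 ^ (sset n).card := by
  rw [vset_eq n hn, Set.ncard_coe_finset,
    Finset.card_image_of_injOn (polyOf_injOn n), Finset.card_powerset]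

lemma markov (n : ℕ) (hn : 0 < n) (r : ℝ) (T : ℝ) :
    (Set.ncard {V ∈ VSet n | (lnorm 4 (rot n r V)) ^ 4 < T} : ℝ) ≤ 2 ^ (sset n).card ∧
    T * (2 ^ (sset n).card - (Set.ncard {V ∈ VSet n | (lnorm 4 (rot n r V)) ^ 4 < T} : ℝ))
      ≤ 2 ^ (sset n).card * 3 * ((sset n).card : ℝ) ^ 2 := by
  classical
  set P := (sset n).powerset with hP
  have hgood : {V ∈ VSet n | (lnorm 4 (rot n r V)) ^ 4 < T}
      = ↑((P.filter (fun t => (lnorm 4 (rot n r (polyOf n t))) ^ 4 < T)).image (polyOf n)) := by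
    rw [vset_eq n hn]
    ext V
    simp only [Set.mem_setOf_eq, Finset.coe_image, Set.mem_image, Finset.mem_coe,
      Finset.mem_filter]
    constructor
    · rintro ⟨⟨t, ht, rfl⟩, hc⟩; exact ⟨t, ⟨ht, hc⟩, rfl⟩
    · rintro ⟨t, ⟨ht, hc⟩, rfl⟩; exact ⟨⟨t, ht, rfl⟩, hc⟩
  have hgcard : Set.ncard {V ∈ VSet n | (lnorm 4 (rot n r V)) ^ 4 < T}
      = (P.filter (fun t => (lnorm 4 (rot n r (polyOf n t))) ^ 4 < T)).card := by
    rw [hgood, Set.ncard_coe_finset]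
    refine Finset.card_image_of_injOn fun t1 h1 t2 h2 heq => ?_
    exact polyOf_injOn n t1 (Finset.mem_of_mem_filter _ (Finset.mem_coe.mp h1))
      t2 (Finset.mem_of_mem_filter _ (Finset.mem_coe.mp h2)) heq
  have hsplit : (P.filter (fun t => (lnorm 4 (rot n r (polyOf n t))) ^ 4 < T)).card
      + (P.filter (fun t => ¬ ((lnorm 4 (rot n r (polyOf n t))) ^ 4 < T))).card = P.card :=
    Finset.card_filter_add_card_filter_not _
  have hPcard : P.card = 2 ^ (sset n).card := Finset.card_powerset _
  set g := (P.filter (fun t => (lnorm 4 (rot n r (polyOf n t))) ^ 4 < T)).card with hg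
  set b := (P.filter (fun t => ¬ ((lnorm 4 (rot n r (polyOf n t))) ^ 4 < T))).card with hb
  have hgb : (g : ℝ) + b = 2 ^ (sset n).card := by
    rw [hPcard] at hsplit
    exact_mod_cast hsplit
  have hbT : (b : ℝ) * T ≤ 2 ^ (sset n).card * 3 * ((sset n).card : ℝ) ^ 2 := by
    calc (b : ℝ) * T
        = ∑ _t ∈ P.filter (fun t => ¬ ((lnorm 4 (rot n r (polyOf n t))) ^ 4 < T)), T := by
          rw [Finset.sum_const, nsmul_eq_mul]
      _ ≤ ∑ t ∈ P.filter (fun t => ¬ ((lnorm 4 (rot n r (polyOf n t))) ^ 4 < T)),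
            (lnorm 4 (rot n r (polyOf n t))) ^ 4 :=
          Finset.sum_le_sum fun t ht => le_of_not_gt (Finset.mem_filter.mp ht).2
      _ ≤ ∑ t ∈ P, (lnorm 4 (rot n r (polyOf n t))) ^ 4 :=
          Finset.sum_le_sum_of_subset_of_nonneg (Finset.filter_subset _ _)
            fun t _ _ => by positivity
      _ ≤ _ := sum_bound n r hn
  constructor
  · rw [hgcard]
    have hb0 : (0:ℝ) ≤ b := Nat.cast_nonneg b
    linarith
  · rw [hgcard]
    have : (2:ℝ) ^ (sset n).card - g = b := by linarith
    rw [this]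
    linarith [hbT]

lemma card_sset_totient (n : ℕ) : Nat.totient n + (sset n).card = n := by
  classical
  rw [Nat.totient]
  have h1 : (Finset.range n).filter n.Coprime
      = (Finset.range n).filter (fun j => Nat.gcd j n = 1) := by
    apply Finset.filter_congr
    intro j _
    simp [Nat.Coprime, Nat.gcd_comm]
  rw [h1]
  have h := Finset.card_filter_add_card_filter_not
    (s := Finset.range n) (p := fun j => Nat.gcd j n = 1)
  simpa [sset, Finset.filter_congr_decidable] using h

lemma sset_card_pos (n : ℕ) (hn : 1 < n) : 0 < (sset n).card := by
  refine Finset.card_pos.mpr ⟨0, ?_⟩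
  rw [mem_sset]
  constructor
  · omega
  · simpa [Nat.gcd_zero_left] using (by omega : n ≠ 1)

open Filter in
lemma ratio_bounds (n : ℕ) (hn1 : 1 < n) (r : ℝ) :
    1 - 1 / (96 * Real.log n) ≤
      (Set.ncard {V ∈ VSet n | (lnorm 4 (rot n r V)) ^ 4 <
          288 * ((n : ℝ) - (Nat.totient n : ℝ)) ^ 2 * Real.log n} : ℝ) /
        (Set.ncard (VSet n) : ℝ) ∧
    (Set.ncard {V ∈ VSet n | (lnorm 4 (rot n r V)) ^ 4 <
        288 * ((n : ℝ) - (Nat.totient n : ℝ)) ^ 2 * Real.log n} : ℝ) /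
      (Set.ncard (VSet n) : ℝ) ≤ 1 := by
  have hn0 : 0 < n := by omega
  have hψ : 0 < (sset n).card := sset_card_pos n hn1
  have hψR : (0:ℝ) < ((sset n).card : ℝ) := by exact_mod_cast hψ
  have hlog : 0 < Real.log n := Real.log_pos (by exact_mod_cast hn1)
  have hcast : ((sset n).card : ℝ) = (n : ℝ) - (Nat.totient n : ℝ) := by
    have h2 : ((Nat.totient n : ℝ)) + ((sset n).card : ℝ) = (n:ℝ) := by
      exact_mod_cast card_sset_totient n
    linarith
  set T := 288 * ((n : ℝ) - (Nat.totient n : ℝ)) ^ 2 * Real.log n with hT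
  have hTψ : T = 288 * ((sset n).card : ℝ) ^ 2 * Real.log n := by rw [hT, hcast]
  obtain ⟨h1, h2⟩ := markov n hn0 r T
  set gR := ((Set.ncard {V ∈ VSet n | (lnorm 4 (rot n r V)) ^ 4 < T} : ℕ) : ℝ) with hgRdef
  have hden : (Set.ncard (VSet n) : ℝ) = 2 ^ (sset n).card := by
    rw [vset_ncard n hn0]; push_cast; ring
  have hE : (0:ℝ) < 2 ^ (sset n).card := by positivity
  have hg0 : (0:ℝ) ≤ (Set.ncard {V ∈ VSet n | (lnorm 4 (rot n r V)) ^ 4 < T} : ℝ) :=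
    Nat.cast_nonneg _
  constructor
  · rw [hden, le_div_iff₀ hE]
    have h3 : (2:ℝ) ^ (sset n).card - gR
        ≤ 2 ^ (sset n).card / (96 * Real.log n) := by
      rw [le_div_iff₀ (by positivity : (0:ℝ) < 96 * Real.log n)]
      rw [hTψ] at h2
      nlinarith [h2, mul_pos hψR hψR]
    have h4 : (1 - 1 / (96 * Real.log n)) * 2 ^ (sset n).card
        = 2 ^ (sset n).card - (2:ℝ) ^ (sset n).card / (96 * Real.log n) := by
      ring
    rw [h4]
    linarith
  · rw [hden, div_le_one hE]
    exact h1


/-- For `V` uniform on `𝒱_n`, `Pr(‖V_r‖₄⁴ < 288 ψ(n)² log n) → 1`. -/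
theorem stmt_16 (N : ℕ → ℕ) (hmono : StrictMono N)
    (hodd : ∀ k, Odd (N k)) (hsqf : ∀ k, Squarefree (N k)) (hgt : ∀ k, 1 < N k)
    (r : ℝ) :
    Tendsto (fun k =>
        (Set.ncard {V ∈ VSet (N k) |
            (lnorm 4 (rot (N k) r V)) ^ 4 <
              288 * ((N k : ℝ) - (Nat.totient (N k) : ℝ)) ^ 2 * Real.log (N k)} : ℝ) /
          (Set.ncard (VSet (N k)) : ℝ))
      atTop (nhds 1) := by
  have hNat : Tendsto (fun k => ((N k : ℝ))) atTop atTop :=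
    tendsto_natCast_atTop_atTop.comp (tendsto_atTop_mono (fun k => hmono.le_apply) tendsto_id)
  have hlog : Tendsto (fun k => Real.log (N k)) atTop atTop :=
    Real.tendsto_log_atTop.comp hNat
  have h96 : Tendsto (fun k => 96 * Real.log (N k)) atTop atTop :=
    hlog.const_mul_atTop (by norm_num)
  have hinv : Tendsto (fun k => 1 / (96 * Real.log (N k))) atTop (nhds 0) :=
    Tendsto.div_atTop tendsto_const_nhds h96
  have hlower : Tendsto (fun k => 1 - 1 / (96 * Real.log (N k))) atTop (nhds (1:ℝ)) := by
    simpa using (tendsto_const_nhds (x := (1:ℝ)) (f := atTop)).sub hinv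
  exact tendsto_of_tendsto_of_tendsto_of_le_of_le hlower tendsto_const_nhds
    (fun k => (ratio_bounds (N k) (hgt k) r).1) (fun k => (ratio_bounds (N k) (hgt k) r).2)
end
end

section
/- Let n > 1 be an odd square-free integer with smallest prime factor p_n, and let V(z) = ∑_{0≤j≤n−1, gcd(j,n)>1} z^j. Then for every u in the set {n/p_n, 2n/p_n, …, (p_n−1)n/p_n}, V(ζ_n^u) = φ(n)/(p_n − 1). -/
noncomputable section

open Polynomial Filter

/-! ### Auxiliary lemmas for `stmt_17` -/

private lemma pow_mod_eq_17 (z : ℂ) (p a : ℕ) (h : z ^ p = 1) : z ^ a = z ^ (a % p) := by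
  conv_lhs => rw [← Nat.div_add_mod a p]
  rw [pow_add, pow_mul, h, one_pow, one_mul]

private lemma sum_units_zmod_prime_17 (p : ℕ) [NeZero p] (hp : p.Prime) (z : ℂ)
    (hzp : z ^ p = 1) (hz1 : z ≠ 1) : ∑ a : (ZMod p)ˣ, z ^ (a : ZMod p).val = -1 := by
  haveI := Fact.mk hp
  have hz1' : z - 1 ≠ 0 := sub_ne_zero.mpr hz1
  have hgeom : ∑ c ∈ Finset.range p, z ^ c = 0 := by
    have h2 := geom_sum_mul z p
    rw [hzp, sub_self] at h2
    rcases mul_eq_zero.mp h2 with h | h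
    · exact h
    · exact absurd h hz1'
  have htot : ∑ x : ZMod p, z ^ x.val = 0 := by
    rw [← hgeom]
    apply Finset.sum_nbij' (i := fun (x : ZMod p) => x.val)
      (j := fun (c : ℕ) => (c : ZMod p))
    · intro a _; exact Finset.mem_range.mpr (ZMod.val_lt a)
    · intro c _; exact Finset.mem_univ _
    · intro a _; exact ZMod.natCast_zmod_val a
    · intro c hc; exact (ZMod.val_natCast p c).trans (Nat.mod_eq_of_lt (Finset.mem_range.mp hc))
    · intro a _; rfl
  have herase : ∑ a : (ZMod p)ˣ, z ^ (a : ZMod p).val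
      = ∑ x ∈ Finset.univ.erase (0 : ZMod p), z ^ x.val := by
    apply Finset.sum_nbij' (i := fun (a : (ZMod p)ˣ) => (a : ZMod p))
      (j := fun (x : ZMod p) => if h : x = 0 then 1 else Units.mk0 x h)
    · intro a _
      exact Finset.mem_erase.mpr ⟨a.ne_zero, Finset.mem_univ _⟩
    · intro x _; exact Finset.mem_univ _
    · intro a _
      rw [dif_neg a.ne_zero]
      exact Units.ext rfl
    · intro x hx
      rw [dif_neg (Finset.mem_erase.mp hx).1]
      rfl
    · intro a _; rfl
  have hsplit := Finset.add_sum_erase Finset.univ (fun x : ZMod p => z ^ x.val)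
      (Finset.mem_univ (0 : ZMod p))
  rw [htot] at hsplit
  simp only [ZMod.val_zero, pow_zero] at hsplit
  rw [herase]
  linear_combination hsplit

private lemma crt_fst_17 (p m : ℕ) (hp : 0 < p) (hm : 0 < m) (h : Nat.Coprime p m)
    (x : ZMod (p * m)) : (ZMod.chineseRemainder h x).1 = ((x.val : ℕ) : ZMod p) := by
  haveI : NeZero (p * m) := ⟨Nat.mul_ne_zero hp.ne' hm.ne'⟩
  conv_lhs => rw [← ZMod.natCast_zmod_val x, map_natCast]
  rw [Prod.fst_natCast]

private lemma ramanujan_key_17 (p m n : ℕ) [NeZero n] (hn : n = p * m) (hp : p.Prime)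
    (hm : 0 < m) (hcop : Nat.Coprime p m) (z : ℂ) (hzp : z ^ p = 1) (hz1 : z ≠ 1) :
    ∑ x : (ZMod n)ˣ, z ^ ((x : ZMod n).val % p) = -(Nat.totient m : ℂ) := by
  subst hn
  haveI : NeZero p := ⟨hp.pos.ne'⟩
  haveI : NeZero m := ⟨hm.ne'⟩
  let e : (ZMod (p * m))ˣ ≃* (ZMod p)ˣ × (ZMod m)ˣ :=
    (Units.mapEquiv (ZMod.chineseRemainder hcop).toMulEquiv).trans MulEquiv.prodUnits
  have he : ∀ x : (ZMod (p * m))ˣ, ((e x).1 : ZMod p).val = (x : ZMod (p * m)).val % p := by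
    intro x
    have h1 : ((e x).1 : ZMod p) = (ZMod.chineseRemainder hcop (x : ZMod (p * m))).1 := rfl
    rw [h1, crt_fst_17 p m hp.pos hm hcop, ZMod.val_natCast]
  have step1 : ∑ x : (ZMod (p * m))ˣ, z ^ ((x : ZMod (p * m)).val % p)
      = ∑ y : (ZMod p)ˣ × (ZMod m)ˣ, z ^ ((y.1 : ZMod p).val) := by
    apply Fintype.sum_equiv e
    intro x
    exact congrArg (fun k => z ^ k) (he x).symm
  rw [step1, Fintype.sum_prod_type]
  simp only [Finset.sum_const, Finset.card_univ, nsmul_eq_mul]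
  rw [← Finset.mul_sum, ZMod.card_units_eq_totient,
    sum_units_zmod_prime_17 p hp z hzp hz1, mul_neg_one]

private lemma sum_coprime_units_17 (n : ℕ) [NeZero n] (f : ℕ → ℂ) :
    ∑ j ∈ (Finset.range n).filter (fun j => Nat.gcd j n = 1), f j
      = ∑ x : (ZMod n)ˣ, f ((x : ZMod n).val) := by
  refine Finset.sum_bij' (fun j hj => ZMod.unitOfCoprime j (Finset.mem_filter.mp hj).2)
    (fun (x : (ZMod n)ˣ) _ => (x : ZMod n).val) ?hi ?hj ?left ?right ?h
  case hi => intro a _; exact Finset.mem_univ _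
  case hj =>
    intro x _
    exact Finset.mem_filter.mpr ⟨Finset.mem_range.mpr (ZMod.val_lt _),
      ZMod.val_coe_unit_coprime x⟩
  case left =>
    intro j hj
    have hjlt : j < n := Finset.mem_range.mp (Finset.mem_filter.mp hj).1
    show ((ZMod.unitOfCoprime j _ : (ZMod n)ˣ) : ZMod n).val = j
    rw [ZMod.coe_unitOfCoprime, ZMod.val_natCast, Nat.mod_eq_of_lt hjlt]
  case right =>
    intro x _
    exact Units.ext (ZMod.natCast_zmod_val _)
  case h =>
    intro j hj
    have hjlt : j < n := Finset.mem_range.mp (Finset.mem_filter.mp hj).1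
    have hval : ((ZMod.unitOfCoprime j (Finset.mem_filter.mp hj).2 : (ZMod n)ˣ) : ZMod n).val
        = j := by
      rw [ZMod.coe_unitOfCoprime, ZMod.val_natCast, Nat.mod_eq_of_lt hjlt]
    rw [hval]

/-- For odd square-free `n > 1` with smallest prime factor `p = n.minFac` and
`V(z) = sum_{gcd(j,n)>1} z^j`, every `u in {n/p, 2n/p, ..., (p-1)n/p}` satisfies
`V(zeta_n^u) = phi(n)/(p-1)`. -/
theorem stmt_17 (n : ℕ) (hn : 1 < n) (hodd : Odd n) (hsqf : Squarefree n) :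
    ∀ t : ℕ, 1 ≤ t → t ≤ n.minFac - 1 →
      (Vall n).eval (zetaC n ^ (t * (n / n.minFac))) =
        (Nat.totient n : ℂ) / ((n.minFac : ℂ) - 1) := by
  intro t ht1 ht2
  haveI : NeZero n := ⟨by omega⟩
  set p := n.minFac with hpdef
  have hpp : p.Prime := Nat.minFac_prime (by omega)
  have hpn : p ∣ n := Nat.minFac_dvd n
  set m := n / p with hmdef
  have hnm : n = p * m := (Nat.mul_div_cancel' hpn).symm
  have hm0 : 0 < m := Nat.div_pos (Nat.minFac_le (by omega)) hpp.pos
  have hcop : Nat.Coprime p m := by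
    rw [hpp.coprime_iff_not_dvd]
    rintro ⟨k, hk⟩
    exact hpp.ne_one (Nat.isUnit_iff.mp (hsqf p ⟨k, by rw [hnm, hk]; ring⟩))
  have hζ : IsPrimitiveRoot (zetaC n) n := by
    rw [zetaC]
    exact Complex.isPrimitiveRoot_exp n (by omega)
  set z := zetaC n ^ (t * m) with hzdef
  have htm_pos : 0 < t * m := Nat.mul_pos (by omega) hm0
  have htm_lt : t * m < n := by
    calc t * m ≤ (p - 1) * m := Nat.mul_le_mul_right _ ht2
      _ < p * m := (Nat.mul_lt_mul_right hm0).mpr (by have := hpp.two_le; omega)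
      _ = n := hnm.symm
  have hz1 : z ≠ 1 := by
    intro h
    rw [hzdef] at h
    have hd := (hζ.pow_eq_one_iff_dvd (t * m)).mp h
    have := Nat.le_of_dvd htm_pos hd
    omega
  have hzp : z ^ p = 1 := by
    rw [hzdef, ← pow_mul]
    exact (hζ.pow_eq_one_iff_dvd _).mpr ⟨t, by rw [hnm]; ring⟩
  have hzn : z ^ n = 1 := by
    rw [hzdef, ← pow_mul]
    exact (hζ.pow_eq_one_iff_dvd _).mpr ⟨t * m, by ring⟩
  have heval : (Vall n).eval z = ∑ j ∈ Finset.range n,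
      if Nat.gcd j n = 1 then (0 : ℂ) else z ^ j := by
    rw [Vall, Polynomial.eval_finset_sum]
    refine Finset.sum_congr rfl fun j _ => ?_
    split <;> simp
  have hgeom : ∑ j ∈ Finset.range n, z ^ j = 0 := by
    have h2 := geom_sum_mul z n
    rw [hzn, sub_self] at h2
    rcases mul_eq_zero.mp h2 with h | h
    · exact h
    · exact absurd h (sub_ne_zero.mpr hz1)
  have hT : ∑ j ∈ Finset.range n, (if Nat.gcd j n = 1 then z ^ j else 0)
      = -(Nat.totient m : ℂ) := by
    rw [← Finset.sum_filter, sum_coprime_units_17 n (fun j => z ^ j)]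
    rw [Finset.sum_congr rfl (fun x _ => pow_mod_eq_17 z p _ hzp)]
    exact ramanujan_key_17 p m n hnm hpp hm0 hcop z hzp hz1
  have htotient : (Nat.totient n : ℂ) = ((p : ℂ) - 1) * (Nat.totient m : ℂ) := by
    rw [hnm, Nat.totient_mul hcop, Nat.totient_prime hpp]
    push_cast [Nat.cast_sub hpp.one_le]
    ring
  have hpne : (p : ℂ) - 1 ≠ 0 := by
    intro h
    have h1 : (p : ℂ) = 1 := by linear_combination h
    have : p = 1 := by exact_mod_cast h1
    exact hpp.ne_one this
  rw [heval]
  have hsplit : ∀ j ∈ Finset.range n, (if Nat.gcd j n = 1 then (0 : ℂ) else z ^ j)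
      = z ^ j - (if Nat.gcd j n = 1 then z ^ j else 0) := by
    intro j _; split <;> ring
  rw [Finset.sum_congr rfl hsplit, Finset.sum_sub_distrib, hgeom, hT, htotient]
  field_simp
  ring
end
end
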